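/- arXiv:2408.04921 — 4 statements merged into one kernel-verified Lean document; each statement's English description precedes it below -/
import Mathlib

section
/- Let λ = (λ_1, ..., λ_l) be a partition and m a positive integer. If an m-rim hook η of λ has height r ≥ 1 and starts at row i (occupying rows i through i+r), then ∑_{j=0}^{r-1}(λ_{i+j} − λ_{i+j+1} + 1) + 1 ≤ m ≤ ∑_{j=0}^{r-1}(λ_{i+j} − λ_{i+j+1} + 1) + (λ_{i+r} − λ_{i+r+1}), equivalently λ_{i+r+1} − r ≤ λ_i − m ≤ λ_{i+r} − (r+1). -/
open scoped Classical

/-- A function `ℕ → ℕ` representing a partition: weakly decreasing and eventually zero.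
Row `i` (0-indexed) has `lam i` boxes. -/
def IsPartitionFun (lam : ℕ → ℕ) : Prop :=
  Antitone lam ∧ ∃ N, ∀ i ≥ N, lam i = 0

/-- The size `|λ|` of a partition function. -/
noncomputable def msize (lam : ℕ → ℕ) : ℕ := ∑ᶠ i, lam i

/-- The cells of the skew shape `λ − μ`. -/
def skewCells (lam mu : ℕ → ℕ) : Set (ℕ × ℕ) :=
  {c | mu c.1 ≤ c.2 ∧ c.2 < lam c.1}

/-- Two cells are adjacent if they share an edge. -/
def AdjCell (c d : ℕ × ℕ) : Prop :=
  (c.1 = d.1 ∧ (c.2 + 1 = d.2 ∨ d.2 + 1 = c.2)) ∨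
  (c.2 = d.2 ∧ (c.1 + 1 = d.1 ∨ d.1 + 1 = c.1))

/-- A set of cells is (edge-)connected. -/
def CellConnected (S : Set (ℕ × ℕ)) : Prop :=
  ∀ c ∈ S, ∀ d ∈ S, Relation.ReflTransGen (fun x y => x ∈ S ∧ y ∈ S ∧ AdjCell x y) c d

/-- A set of cells contains no 2×2 block. -/
def NoSquare (S : Set (ℕ × ℕ)) : Prop :=
  ¬ ∃ i j : ℕ, (i, j) ∈ S ∧ (i + 1, j) ∈ S ∧ (i, j + 1) ∈ S ∧ (i + 1, j + 1) ∈ S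

/-- `λ − μ` is a rim hook (border strip) of size `m`: both are partitions, `μ ⊆ λ`,
and the skew shape has `m` cells, is connected and contains no 2×2 block. -/
def IsRimHook (lam mu : ℕ → ℕ) (m : ℕ) : Prop :=
  IsPartitionFun lam ∧ IsPartitionFun mu ∧ (∀ i, mu i ≤ lam i) ∧
  (skewCells lam mu).ncard = m ∧ CellConnected (skewCells lam mu) ∧ NoSquare (skewCells lam mu)

/-- The height of the skew shape `λ − μ`: one less than the number of occupied rows. -/
noncomputable def heightOf (lam mu : ℕ → ℕ) : ℕ := {i | mu i < lam i}.ncard - 1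

/-- The irreducible character value `χ^λ_ρ` of the symmetric group, presented through
the (iterated) Murnaghan–Nakayama rule: remove rim hooks of sizes `ρ₁, ρ₂, …` in turn. -/
noncomputable def charMN : List ℕ → (ℕ → ℕ) → ℤ
  | [], lam => if ∀ i, lam i = 0 then 1 else 0
  | r :: rho, lam =>
      ∑ᶠ mu : {mu : ℕ → ℕ // IsRimHook lam mu r},
        (-1) ^ heightOf lam mu.1 * charMN rho mu.1

/-- A list is a partition of `n`: weakly decreasing, positive parts, summing to `n`. -/
def IsPartitionList (rho : List ℕ) (n : ℕ) : Prop :=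
  rho.Pairwise (· ≥ ·) ∧ (∀ r ∈ rho, 0 < r) ∧ rho.sum = n

lemma cross_row {S : Set (ℕ × ℕ)} {c d : ℕ × ℕ} (j : ℕ)
    (h : Relation.ReflTransGen (fun x y => x ∈ S ∧ y ∈ S ∧ AdjCell x y) c d)
    (hc : c.1 ≤ j) : j < d.1 → ∃ col, (j, col) ∈ S ∧ (j + 1, col) ∈ S := by
  induction h with
  | refl => intro hd; omega
  | @tail p q hpath hstep ih =>
    intro hd
    by_cases hp : p.1 ≤ j
    · obtain ⟨hpS, hqS, hadj⟩ := hstep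
      simp only [AdjCell] at hadj
      rcases hadj with ⟨h1, _⟩ | ⟨h2, h3⟩
      · omega
      · have hp1 : p.1 = j := by omega
        have hq1 : q.1 = j + 1 := by omega
        refine ⟨p.2, ?_, ?_⟩
        · have : (j, p.2) = p := by rw [← hp1]
          rwa [this]
        · have : (j + 1, p.2) = q := by rw [← hq1, h2]
          rwa [this]
    · exact ih (by omega)

/-- If an `m`-rim hook of `λ` has height `r ≥ 1` and occupies rows `i` through `i+r`
(0-indexed), then
`∑_{j=0}^{r-1}(λ_{i+j} − λ_{i+j+1} + 1) + 1 ≤ m ≤ ∑_{j=0}^{r-1}(λ_{i+j} − λ_{i+j+1} + 1) + (λ_{i+r} − λ_{i+r+1})`,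
equivalently `λ_{i+r+1} − r ≤ λ_i − m ≤ λ_{i+r} − (r+1)`. -/
theorem rim_hook_inequalities (lam mu : ℕ → ℕ) (m r i : ℕ) (hm : 1 ≤ m) (hr : 1 ≤ r)
    (hhook : IsRimHook lam mu m)
    (hrows : {j | mu j < lam j} = Set.Icc i (i + r)) :
    ((∑ j ∈ Finset.range r, ((lam (i + j) : ℤ) - (lam (i + j + 1) : ℤ) + 1)) + 1 ≤ (m : ℤ) ∧
      (m : ℤ) ≤ (∑ j ∈ Finset.range r, ((lam (i + j) : ℤ) - (lam (i + j + 1) : ℤ) + 1)) +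
        ((lam (i + r) : ℤ) - (lam (i + r + 1) : ℤ))) ∧
    ((lam (i + r + 1) : ℤ) - (r : ℤ) ≤ (lam i : ℤ) - (m : ℤ) ∧
      (lam i : ℤ) - (m : ℤ) ≤ (lam (i + r) : ℤ) - ((r : ℤ) + 1)) := by
  obtain ⟨hlamP, hmuP, hle, hcard, hconn, hnosq⟩ := hhook
  have hlam_anti := hlamP.1
  have hmu_anti := hmuP.1
  have hrow : ∀ j, mu j < lam j ↔ i ≤ j ∧ j ≤ i + r := by
    intro j
    have := Set.ext_iff.mp hrows j
    simpa using this
  have hstep : ∀ j, i ≤ j → j < i + r → (mu j : ℤ) = (lam (j + 1) : ℤ) - 1 := by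
    intro j hij hjr
    have hj1 : mu (j + 1) < lam (j + 1) := (hrow (j + 1)).2 ⟨by omega, by omega⟩
    have hj0 : mu j < lam j := (hrow j).2 ⟨hij, by omega⟩
    have hover : mu j < lam (j + 1) := by
      have hc : ((j, mu j) : ℕ × ℕ) ∈ skewCells lam mu := ⟨le_refl _, hj0⟩
      have hd : ((j + 1, mu (j + 1)) : ℕ × ℕ) ∈ skewCells lam mu := ⟨le_refl _, hj1⟩
      obtain ⟨col, h1, h2⟩ := cross_row j (hconn _ hc _ hd) (by simp) (by simp)
      exact lt_of_le_of_lt h1.1 h2.2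
    have hsq : lam (j + 1) ≤ mu j + 1 := by
      by_contra hlt
      push_neg at hlt
      exact hnosq ⟨j, mu j, ⟨le_refl _, hj0⟩,
        ⟨hmu_anti (by omega), hover⟩,
        ⟨Nat.le_succ _, lt_of_lt_of_le hlt (hlam_anti (by omega))⟩,
        ⟨le_trans (hmu_anti (Nat.le_succ j)) (Nat.le_succ _), hlt⟩⟩
    omega
  have htop : mu (i + r + 1) = lam (i + r + 1) := by
    have h2 : ¬ mu (i + r + 1) < lam (i + r + 1) := by rw [hrow]; omega
    have := hle (i + r + 1)
    omega
  have hfin : skewCells lam mu =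
      ↑((Finset.Icc i (i + r)).biUnion (fun j => {j} ×ˢ Finset.Ico (mu j) (lam j))) := by
    ext ⟨a, b⟩
    simp only [skewCells, Set.mem_setOf_eq, Finset.coe_biUnion, Finset.mem_coe,
      Set.mem_iUnion, Finset.mem_Icc, Finset.mem_product, Finset.mem_singleton,
      Finset.mem_Ico, Finset.mem_biUnion]
    constructor
    · rintro ⟨h1, h2⟩
      exact ⟨a, (hrow a).1 (lt_of_le_of_lt h1 h2), rfl, h1, h2⟩
    · rintro ⟨x, _, rfl, h1, h2⟩
      exact ⟨h1, h2⟩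
  have hm' : m = ∑ j ∈ Finset.Icc i (i + r), (lam j - mu j) := by
    rw [← hcard, hfin, Set.ncard_coe_finset]
    rw [Finset.card_biUnion]
    · refine Finset.sum_congr rfl fun j _ => ?_
      simp [Nat.card_Ico]
    · intro x _ y _ hxy
      simp only [Finset.disjoint_left]
      rintro ⟨a, b⟩ ha hb
      simp only [Finset.mem_product, Finset.mem_singleton] at ha hb
      exact hxy (ha.1 ▸ hb.1 ▸ rfl)
  have hmZ : (m : ℤ) = ∑ j ∈ Finset.Icc i (i + r), ((lam j : ℤ) - mu j) := by
    rw [hm', Nat.cast_sum]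
    exact Finset.sum_congr rfl fun j _ => Nat.cast_sub (hle j)
  have hmZ2 : (m : ℤ) = (∑ k ∈ Finset.range r, ((lam (i + k) : ℤ) - (lam (i + k + 1) : ℤ) + 1)) +
      ((lam (i + r) : ℤ) - (mu (i + r) : ℤ)) := by
    rw [hmZ, ← Finset.Ico_add_one_right_eq_Icc, Finset.sum_Ico_eq_sum_range]
    have he : i + r + 1 - i = r + 1 := by omega
    rw [he, Finset.sum_range_succ]
    congr 1
    refine Finset.sum_congr rfl fun k hk => ?_
    rw [Finset.mem_range] at hk
    rw [hstep (i + k) (by omega) (by omega)]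
    ring
  have htel : ∀ n : ℕ, (∑ k ∈ Finset.range n, ((lam (i + k) : ℤ) - (lam (i + k + 1) : ℤ) + 1)) =
      (lam i : ℤ) - lam (i + n) + n := by
    intro n
    induction n with
    | zero => simp
    | succ n ih =>
      have e : i + (n + 1) = i + n + 1 := by omega
      rw [Finset.sum_range_succ, ih, e]
      push_cast
      ring
  have hmu_top : (lam (i + r + 1) : ℤ) ≤ mu (i + r) := by
    have := hmu_anti (show i + r ≤ i + r + 1 by omega)
    omega
  have hmu_lt : (mu (i + r) : ℤ) < lam (i + r) := by
    have := (hrow (i + r)).2 ⟨by omega, le_refl _⟩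
    omega
  have hA := htel r
  refine ⟨⟨by linarith, by linarith⟩, by linarith, by linarith⟩
end

section
/- Any partition λ of n is uniquely determined by its k-core γ_λ together with its k-quotient (λ^{(0)}, ..., λ^{(k-1)}), and |λ| = k·(|λ^{(0)}| + ⋯ + |λ^{(k-1)}|) + |γ_λ|. -/
open scoped Classical

/-- `γ` is a `k`-core of `λ`: reachable from `λ` by successive removals of `k`-rim hooks,
and admitting no further `k`-rim hook removal. -/
def IsCoreOf (k : ℕ) (lam gamma : ℕ → ℕ) : Prop :=
  Relation.ReflTransGen (fun a b => IsRimHook a b k) lam gamma ∧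
  ¬ ∃ mu : ℕ → ℕ, IsRimHook gamma mu k

/-- The number of beta-numbers used for the `k`-quotient: a multiple of `k` bounding the
length of `λ`. -/
noncomputable def betaLen (k : ℕ) (lam : ℕ → ℕ) : ℕ := k * (msize lam + 1)

/-- The beta-numbers `ξ_i = λ_i + (m − 1 − i)` (0-indexed, `i < m`, `m = betaLen k lam`). -/
noncomputable def beta (k : ℕ) (lam : ℕ → ℕ) (i : ℕ) : ℕ := lam i + (betaLen k lam - 1 - i)

/-- The `r`-th constituent of the `k`-quotient of `λ`, as a multiset of parts: for each
beta-number `ξ_i ≡ r (mod k)` of rank `s` (from the top) among those, the part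
`ξ^{(r)}_s div k − (m_r − s)`. -/
noncomputable def quotientPart (k : ℕ) (lam : ℕ → ℕ) (r : ℕ) : Multiset ℕ :=
  (((Finset.range (betaLen k lam)).filter (fun i => beta k lam i % k = r)).val).map
    (fun i => beta k lam i / k -
      ((Finset.range (betaLen k lam)).filter
        (fun i' => beta k lam i' % k = r ∧ beta k lam i' < beta k lam i)).card)


/- ===================== auxiliary development ===================== -/

open Finset

lemma msize_eq_sum {lam : ℕ → ℕ} {N : ℕ} (h0 : ∀ i ≥ N, lam i = 0) :
    msize lam = ∑ i ∈ Finset.range N, lam i := by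
  refine finsum_eq_sum_of_support_subset lam ?_
  intro i hi
  simp only [Function.mem_support] at hi
  simp only [Finset.coe_range, Set.mem_Iio]
  by_contra h
  exact hi (h0 i (le_of_not_gt h))

lemma zero_of_ge_msize {lam : ℕ → ℕ} (h : IsPartitionFun lam) :
    ∀ i ≥ msize lam, lam i = 0 := by
  obtain ⟨hanti, N, hN⟩ := h
  intro i hi
  by_contra hne
  have h1 : ∀ j ≤ i, 1 ≤ lam j := fun j hj => Nat.one_le_iff_ne_zero.2 fun hz => by
    have := hanti hj; omega
  have hNi : msize lam = ∑ j ∈ Finset.range (max N (i+1)), lam j :=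
    msize_eq_sum (fun j hj => hN j (le_trans (le_max_left _ _) hj))
  have : ∑ j ∈ Finset.range (i+1), (1:ℕ) ≤ ∑ j ∈ Finset.range (max N (i+1)), lam j := by
    refine le_trans (Finset.sum_le_sum fun j hj => h1 j (by simp at hj; omega)) ?_
    exact Finset.sum_le_sum_of_subset (by simp)
  simp at this
  omega

/-- The skew shape as a finset. -/
noncomputable def skewFinset (lam mu : ℕ → ℕ) (M : ℕ) : Finset (ℕ × ℕ) :=
  (Finset.range M).biUnion fun i => (Finset.Ico (mu i) (lam i)).image fun j => (i, j)

lemma skewCells_eq_finset {lam mu : ℕ → ℕ} {M : ℕ} (hM : ∀ i ≥ M, lam i = 0) :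
    skewCells lam mu = ↑(skewFinset lam mu M) := by
  ext ⟨i, j⟩
  simp only [skewCells, Set.mem_setOf_eq, skewFinset, Finset.coe_biUnion, Set.mem_iUnion,
    Finset.mem_coe, Finset.mem_image, Finset.mem_Ico, Finset.mem_range]
  constructor
  · rintro ⟨h1, h2⟩
    have hiM : i < M := by
      by_contra h; exact absurd (hM i (le_of_not_gt h)) (by omega)
    exact ⟨i, hiM, j, ⟨h1, h2⟩, rfl⟩
  · rintro ⟨i', _, j', ⟨h1, h2⟩, he⟩
    cases he; exact ⟨h1, h2⟩

lemma skewFinset_card {lam mu : ℕ → ℕ} {M : ℕ} :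
    (skewFinset lam mu M).card = ∑ i ∈ Finset.range M, (lam i - mu i) := by
  rw [skewFinset, Finset.card_biUnion]
  · refine Finset.sum_congr rfl fun i _ => ?_
    rw [Finset.card_image_of_injective _ (fun a b h => by injection h), Nat.card_Ico]
  · intro x _ y _ hxy
    simp only [Finset.disjoint_left, Finset.mem_image, Finset.mem_Ico]
    rintro a ⟨j, _, rfl⟩ ⟨j', _, he⟩
    exact hxy (by injection he with h1 h2; exact h1.symm ▸ rfl)

lemma skew_ncard {lam mu : ℕ → ℕ} {M : ℕ} (hM : ∀ i ≥ M, lam i = 0) :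
    (skewCells lam mu).ncard = ∑ i ∈ Finset.range M, (lam i - mu i) := by
  rw [skewCells_eq_finset hM, Set.ncard_coe_finset, skewFinset_card]

/-- beta numbers with M slots -/
def bfun (M : ℕ) (lam : ℕ → ℕ) (i : ℕ) : ℕ := lam i + (M - 1 - i)

noncomputable def bset (M : ℕ) (lam : ℕ → ℕ) : Finset ℕ :=
  (Finset.range M).image (bfun M lam)

lemma bfun_lt {lam : ℕ → ℕ} {M i j : ℕ} (hanti : Antitone lam)
    (hij : i < j) (hjM : j < M) : bfun M lam j < bfun M lam i := by
  have := hanti (le_of_lt hij)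
  unfold bfun; omega

lemma bfun_le {lam : ℕ → ℕ} {M i j : ℕ} (hanti : Antitone lam)
    (hij : i ≤ j) (hjM : j < M) : bfun M lam j + (j - i) ≤ bfun M lam i := by
  have := hanti hij
  unfold bfun; omega

lemma mem_bset {lam : ℕ → ℕ} {M z : ℕ} :
    z ∈ bset M lam ↔ ∃ i < M, bfun M lam i = z := by
  simp [bset, Finset.mem_image]

lemma bfun_injOn {lam : ℕ → ℕ} {M : ℕ} (hanti : Antitone lam) :
    ∀ i < M, ∀ j < M, bfun M lam i = bfun M lam j → i = j := by
  intro i hi j hj h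
  rcases lt_trichotomy i j with h' | h' | h'
  · exact absurd h (ne_of_gt (bfun_lt hanti h' hj))
  · exact h'
  · exact absurd h (ne_of_lt (bfun_lt hanti h' hi))

lemma bset_card {lam : ℕ → ℕ} {M : ℕ} (hanti : Antitone lam) :
    (bset M lam).card = M := by
  rw [bset, Finset.card_image_of_injOn, Finset.card_range]
  intro i hi j hj h
  simp only [Finset.coe_range, Set.mem_Iio] at hi hj
  exact bfun_injOn hanti i hi j hj h

/-- symmetric closure of ReflTransGen for a symmetric relation -/
lemma rtg_symm {α : Type*} {r : α → α → Prop} (hr : ∀ x y, r x y → r y x) {a b : α}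
    (h : Relation.ReflTransGen r a b) : Relation.ReflTransGen r b a := by
  induction h with
  | refl => exact Relation.ReflTransGen.refl
  | tail _ h2 ih => exact (Relation.ReflTransGen.single (hr _ _ h2)).trans ih

lemma adj_rows {c d : ℕ × ℕ} (h : AdjCell c d) :
    c.1 = d.1 ∨ c.1 + 1 = d.1 ∨ d.1 + 1 = c.1 := by
  rcases h with ⟨h1, _⟩ | ⟨_, h2⟩
  · exact Or.inl h1
  · exact Or.inr h2

/-- intermediate value theorem for rows along paths -/
lemma path_rows {S : Set (ℕ × ℕ)} {c d : ℕ × ℕ} (hc : c ∈ S)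
    (h : Relation.ReflTransGen (fun x y => x ∈ S ∧ y ∈ S ∧ AdjCell x y) c d) :
    ∀ i, ((c.1 ≤ i ∧ i ≤ d.1) ∨ (d.1 ≤ i ∧ i ≤ c.1)) → ∃ j, (i, j) ∈ S := by
  induction h with
  | refl =>
    intro i hi
    have : i = c.1 := by omega
    subst this
    exact ⟨c.2, hc⟩
  | @tail e f _ h2 ih =>
    intro i hi
    obtain ⟨heS, hfS, hadj⟩ := h2
    have hrows := adj_rows hadj
    by_cases hcase : (c.1 ≤ i ∧ i ≤ e.1) ∨ (e.1 ≤ i ∧ i ≤ c.1)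
    · exact ih i hcase
    · have : i = f.1 := by omega
      subst this
      exact ⟨f.2, by simpa using hfS⟩

/-- crossing lemma: a path from row ≤ i to row ≥ i+1 crosses between rows i and i+1 -/
lemma path_cross {S : Set (ℕ × ℕ)} {i : ℕ} {c d : ℕ × ℕ}
    (h : Relation.ReflTransGen (fun x y => x ∈ S ∧ y ∈ S ∧ AdjCell x y) c d)
    (hc1 : c.1 ≤ i) : i + 1 ≤ d.1 → ∃ j, (i, j) ∈ S ∧ (i + 1, j) ∈ S := by
  induction h with
  | refl => intro hd; omega
  | @tail e f _ h2 ih =>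
    intro hd
    obtain ⟨heS, hfS, hadj⟩ := h2
    by_cases hcase : i + 1 ≤ e.1
    · exact ih hcase
    · rcases hadj with ⟨h1, _⟩ | ⟨h2', h3⟩
      · omega
      · have he1 : e.1 = i := by omega
        have hf1 : f.1 = i + 1 := by omega
        refine ⟨e.2, ?_, ?_⟩
        · rw [← he1]; simpa using heS
        · rw [← hf1, h2']; simpa using hfS

lemma tele {lam mu : ℕ → ℕ} {a b : ℕ} (hab : a ≤ b) (hle : ∀ i, mu i ≤ lam i)
    (hmid : ∀ i, a ≤ i → i < b → mu i + 1 = lam (i + 1)) :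
    (∑ i ∈ Finset.Icc a b, (lam i - mu i)) + mu b + a = lam a + b := by
  induction b, hab using Nat.le_induction with
  | base =>
    rw [Finset.Icc_self, Finset.sum_singleton]
    have := hle a; omega
  | succ b hab ih =>
    rw [Finset.sum_Icc_succ_top (by omega)]
    have h1 := hmid b hab (by omega)
    have h2 := hle (b + 1)
    have h3 := ih (fun i hi hi' => hmid i hi (by omega))
    omega

lemma rimHook_structure {lam mu : ℕ → ℕ} {k M : ℕ} (hk : 1 ≤ k)
    (h : IsRimHook lam mu k) (hM : ∀ i ≥ M, lam i = 0) :
    ∃ a b, a ≤ b ∧ b < M ∧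
      (∀ i, i < a ∨ b < i → mu i = lam i) ∧
      (∀ i, a ≤ i → i < b → mu i + 1 = lam (i + 1)) ∧
      (∀ i, a ≤ i → i ≤ b → mu i < lam i) ∧
      k + mu b + a = lam a + b := by
  obtain ⟨⟨hlanti, _⟩, ⟨hmanti, _⟩, hle, hcard, hconn, hnosq⟩ := h
  have hcard' : ∑ i ∈ Finset.range M, (lam i - mu i) = k := by
    rw [← skew_ncard hM, hcard]
  have hex : ∃ i, mu i < lam i := by
    by_contra hno
    push_neg at hno
    have : ∑ i ∈ Finset.range M, (lam i - mu i) = 0 :=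
      Finset.sum_eq_zero fun i _ => by have := hno i; omega
    omega
  classical
  set a := Nat.find hex with ha_def
  have ha : mu a < lam a := Nat.find_spec hex
  have hamin : ∀ i, i < a → ¬ mu i < lam i := fun i hi => Nat.find_min hex hi
  have haM : a < M := by
    by_contra h'
    have := hM a (le_of_not_gt h'); have := hle a; omega
  set b := Nat.findGreatest (fun i => mu i < lam i) M with hb_def
  have hb : mu b < lam b := Nat.findGreatest_spec (P := fun i => mu i < lam i) (le_of_lt haM) ha
  have hab : a ≤ b := Nat.le_findGreatest (le_of_lt haM) ha
  have hbmax : ∀ i, b < i → ¬ mu i < lam i := by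
    intro i hi
    by_cases hiM : i ≤ M
    · exact Nat.findGreatest_is_greatest (P := fun i => mu i < lam i) hi hiM
    · have := hM i (by omega); have := hle i; omega
  have hbM : b < M := by
    by_contra h'
    have := hM b (le_of_not_gt h'); omega
  -- interval property
  have hmemS : ∀ i, mu i < lam i → (i, mu i) ∈ skewCells lam mu := by
    intro i hi; exact ⟨le_refl _, hi⟩
  have hIvl : ∀ i, a ≤ i → i ≤ b → mu i < lam i := by
    intro i hia hib
    have hpath := hconn (a, mu a) (hmemS a ha) (b, mu b) (hmemS b hb)
    obtain ⟨j, hj⟩ := path_rows (hmemS a ha) hpath i (by simp; omega)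
    obtain ⟨hj1, hj2⟩ := hj
    simp only at hj1 hj2
    omega
  -- crossing + no square
  have hmid : ∀ i, a ≤ i → i < b → mu i + 1 = lam (i + 1) := by
    intro i hia hib
    have hi : mu i < lam i := hIvl i hia (by omega)
    have hi1 : mu (i+1) < lam (i+1) := hIvl (i+1) (by omega) (by omega)
    have hpath := hconn (i, mu i) (hmemS i hi) (i+1, mu (i+1)) (hmemS (i+1) hi1)
    obtain ⟨j, hj1, hj2⟩ := path_cross (i := i) hpath (le_refl _) (le_refl _)
    obtain ⟨hj1a, hj1b⟩ := hj1
    obtain ⟨hj2a, hj2b⟩ := hj2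
    simp only at hj1a hj1b hj2a hj2b
    -- mu i ≤ j and j < lam (i+1) : so mu i < lam (i+1)
    by_contra hne
    have hlt : mu i + 1 < lam (i + 1) := by omega
    have hcell : ∀ p q, mu p ≤ q → q < lam p → (p, q) ∈ skewCells lam mu :=
      fun p q h1 h2 => ⟨h1, h2⟩
    have hmm : mu (i+1) ≤ mu i := hmanti (Nat.le_succ i)
    have hll : lam (i+1) ≤ lam i := hlanti (Nat.le_succ i)
    exact hnosq ⟨i, mu i, hcell i (mu i) (le_refl _) hi,
      hcell (i+1) (mu i) hmm (by omega),
      hcell i (mu i + 1) (by omega) (by omega),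
      hcell (i+1) (mu i + 1) (by omega) hlt⟩
  refine ⟨a, b, hab, hbM, ?_, hmid, hIvl, ?_⟩
  · intro i hi
    rcases hi with hi | hi
    · have := hamin i hi; have := hle i; omega
    · have := hbmax i hi; have := hle i; omega
  · have hsub : ∑ i ∈ Finset.range M, (lam i - mu i) = ∑ i ∈ Finset.Icc a b, (lam i - mu i) := by
      refine (Finset.sum_subset ?_ ?_).symm
      · intro i hi; simp only [Finset.mem_Icc] at hi; simp; omega
      · intro i _ hi
        simp only [Finset.mem_Icc] at hi
        rcases Nat.lt_or_ge i a with h' | h'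
        · have := hamin i h'; have := hle i; omega
        · have := hbmax i (by omega); have := hle i; omega
    have := tele hab hle hmid
    omega

lemma beta_step {lam mu : ℕ → ℕ} {k M : ℕ} (hk : 1 ≤ k) (h : IsRimHook lam mu k)
    (hM : ∀ i ≥ M, lam i = 0) :
    ∃ y, y + k ∈ bset M lam ∧ y ∉ bset M lam ∧
      bset M mu = insert y ((bset M lam).erase (y + k)) := by
  obtain ⟨a, b, hab, hbM, hout, hmid, hivl, htel⟩ := rimHook_structure hk h hM
  obtain ⟨⟨hlanti, _⟩, ⟨hmanti, _⟩, hle, _, _, _⟩ := h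
  have haM : a < M := by omega
  refine ⟨bfun M mu b, ?_, ?_, ?_⟩
  · have : bfun M mu b + k = bfun M lam a := by unfold bfun; omega
    rw [this]; exact mem_bset.2 ⟨a, haM, rfl⟩
  · -- bfun M mu b ∉ bset M lam
    rw [mem_bset]
    rintro ⟨j, hjM, hje⟩
    have hyb : bfun M mu b < bfun M lam b := by
      have := hivl b hab (le_refl b); unfold bfun; omega
    have hjb : b < j := by
      rcases Nat.lt_trichotomy j b with h' | h' | h'
      · have h9 := bfun_lt hlanti h' hbM
        rw [hje] at h9; omega
      · subst h'; rw [hje] at hyb; omega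
      · exact h'
    have h3 : bfun M mu j = bfun M lam j := by
      have := hout j (Or.inr hjb); unfold bfun; omega
    have h4 : bfun M mu j = bfun M mu b := h3.trans hje
    have := bfun_injOn hmanti j hjM b hbM h4
    omega
  · -- the finset equation
    have hyk : bfun M mu b + k = bfun M lam a := by unfold bfun; omega
    have hynotin : bfun M mu b ∉ bset M lam := by
      rw [mem_bset]
      rintro ⟨j, hjM, hje⟩
      have hyb : bfun M mu b < bfun M lam b := by
        have := hivl b hab (le_refl b); unfold bfun; omega
      have hjb : b < j := by
        rcases Nat.lt_trichotomy j b with h' | h' | h'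
        · have h9 := bfun_lt hlanti h' hbM
          rw [hje] at h9; omega
        · subst h'; rw [hje] at hyb; omega
        · exact h'
      have h1 : bfun M mu j = bfun M lam j := by
        have := hout j (Or.inr hjb); unfold bfun; omega
      have h2 : bfun M mu j = bfun M mu b := h1.trans hje
      have := bfun_injOn hmanti j hjM b hbM h2
      omega
    ext z
    rw [Finset.mem_insert, Finset.mem_erase, mem_bset]
    constructor
    · rintro ⟨i, hiM, rfl⟩
      rcases Nat.lt_or_ge i a with h' | h'
      · refine Or.inr ⟨?_, ?_⟩
        · rw [hyk]
          have heq : bfun M mu i = bfun M lam i := by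
            have := hout i (Or.inl h'); unfold bfun; omega
          rw [heq]
          intro hcon
          exact absurd (bfun_injOn hlanti i hiM a haM hcon) (by omega)
        · have heq : bfun M mu i = bfun M lam i := by
            have := hout i (Or.inl h'); unfold bfun; omega
          rw [heq]; exact mem_bset.2 ⟨i, hiM, rfl⟩
      rcases Nat.lt_or_ge i b with h'' | h''
      · -- a ≤ i < b
        have heq : bfun M mu i = bfun M lam (i + 1) := by
          have := hmid i h' h''; unfold bfun; omega
        refine Or.inr ⟨?_, ?_⟩
        · rw [hyk, heq]
          intro hcon
          exact absurd (bfun_injOn hlanti (i+1) (by omega) a haM hcon) (by omega)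
        · rw [heq]; exact mem_bset.2 ⟨i + 1, by omega, rfl⟩
      rcases Nat.eq_or_lt_of_le h'' with h3 | h3
      · left; rw [← h3]
      · refine Or.inr ⟨?_, ?_⟩
        · rw [hyk]
          have heq : bfun M mu i = bfun M lam i := by
            have := hout i (Or.inr h3); unfold bfun; omega
          rw [heq]
          intro hcon
          exact absurd (bfun_injOn hlanti i hiM a haM hcon) (by omega)
        · have heq : bfun M mu i = bfun M lam i := by
            have := hout i (Or.inr h3); unfold bfun; omega
          rw [heq]; exact mem_bset.2 ⟨i, hiM, rfl⟩
    · rintro (rfl | ⟨hne, hz⟩)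
      · exact ⟨b, hbM, rfl⟩
      · obtain ⟨j, hjM, rfl⟩ := mem_bset.1 hz
        have hja : j ≠ a := by
          intro h'; subst h'; exact hne hyk.symm
        rcases Nat.lt_or_ge j a with h' | h'
        · refine ⟨j, hjM, ?_⟩
          have := hout j (Or.inl h'); unfold bfun; omega
        rcases Nat.lt_or_ge b j with h'' | h''
        · refine ⟨j, hjM, ?_⟩
          have := hout j (Or.inr h''); unfold bfun; omega
        · -- a < j ≤ b
          have hja' : a < j := by omega
          refine ⟨j - 1, by omega, ?_⟩
          have := hmid (j - 1) (by omega) (by omega)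
          have hj1 : j - 1 + 1 = j := by omega
          rw [hj1] at this
          unfold bfun; omega

lemma adj_symm {c d : ℕ × ℕ} (h : AdjCell c d) : AdjCell d c := by
  rcases h with ⟨h1, h2⟩ | ⟨h1, h2⟩
  · exact Or.inl ⟨h1.symm, h2.symm⟩
  · exact Or.inr ⟨h1.symm, h2.symm⟩

lemma step_symm {S : Set (ℕ × ℕ)} :
    ∀ x y, (x ∈ S ∧ y ∈ S ∧ AdjCell x y) → (y ∈ S ∧ x ∈ S ∧ AdjCell y x) :=
  fun _ _ ⟨h1, h2, h3⟩ => ⟨h2, h1, adj_symm h3⟩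

lemma mem_skew {lam mu : ℕ → ℕ} {i j : ℕ} :
    (i, j) ∈ skewCells lam mu ↔ mu i ≤ j ∧ j < lam i := Iff.rfl

lemma row_conn {lam mu : ℕ → ℕ} {i j1 : ℕ} (h1 : mu i ≤ j1) :
    ∀ j2, j1 ≤ j2 → j2 < lam i →
    Relation.ReflTransGen (fun x y => x ∈ skewCells lam mu ∧ y ∈ skewCells lam mu ∧ AdjCell x y)
      (i, j1) (i, j2) := by
  intro j2 h12
  induction j2, h12 using Nat.le_induction with
  | base => intro _; exact Relation.ReflTransGen.refl
  | succ j2 h12 ih =>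
    intro hlt
    refine Relation.ReflTransGen.tail (ih (by omega)) ?_
    exact ⟨mem_skew.2 ⟨by omega, by omega⟩, mem_skew.2 ⟨by omega, hlt⟩, Or.inl ⟨rfl, Or.inl rfl⟩⟩

lemma row_conn' {lam mu : ℕ → ℕ} {i j1 j2 : ℕ} (h1 : mu i ≤ j1) (h2 : mu i ≤ j2)
    (h3 : j1 < lam i) (h4 : j2 < lam i) :
    Relation.ReflTransGen (fun x y => x ∈ skewCells lam mu ∧ y ∈ skewCells lam mu ∧ AdjCell x y)
      (i, j1) (i, j2) := by
  rcases Nat.le_total j1 j2 with h | h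
  · exact row_conn h1 j2 h h4
  · exact rtg_symm step_symm (row_conn h2 j1 h h3)

lemma skew_connected {lam mu : ℕ → ℕ} {a b : ℕ}
    (hrows : ∀ i, mu i < lam i ↔ (a ≤ i ∧ i ≤ b))
    (hcross : ∀ i, a ≤ i → i < b → mu (i + 1) ≤ mu i ∧ mu i < lam (i + 1)) :
    CellConnected (skewCells lam mu) := by
  have main : ∀ n i j i' j', (i, j) ∈ skewCells lam mu → (i', j') ∈ skewCells lam mu →
      i' = i + n →
      Relation.ReflTransGen (fun x y => x ∈ skewCells lam mu ∧ y ∈ skewCells lam mu ∧ AdjCell x y)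
        (i, j) (i', j') := by
    intro n
    induction n with
    | zero =>
      intro i j i' j' hm hm' he
      rw [mem_skew] at hm hm'
      subst he
      exact row_conn' hm.1 hm'.1 hm.2 hm'.2
    | succ n ih =>
      intro i j i' j' hm hm' he
      rw [mem_skew] at hm hm'
      have hia : a ≤ i ∧ i ≤ b := (hrows i).1 (by have := hm.1; have := hm.2; omega)
      have hia' : a ≤ i' ∧ i' ≤ b := (hrows i').1 (by have := hm'.1; have := hm'.2; omega)
      have hib : i < b := by omega
      obtain ⟨hc1, hc2⟩ := hcross i hia.1 hib
      have hrowi : mu i < lam i := (hrows i).2 hia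
      have hm1 : (i, mu i) ∈ skewCells lam mu := ⟨le_refl _, hrowi⟩
      have hm2 : (i + 1, mu i) ∈ skewCells lam mu := ⟨hc1, hc2⟩
      refine Relation.ReflTransGen.trans (row_conn' hm.1 (le_refl _) hm.2 hrowi) ?_
      refine Relation.ReflTransGen.trans (Relation.ReflTransGen.single
        ⟨hm1, hm2, Or.inr ⟨rfl, Or.inl rfl⟩⟩) ?_
      exact ih (i + 1) (mu i) i' j' hm2 hm' (by omega)
  intro c hc d hd
  obtain ⟨i, j⟩ := c
  obtain ⟨i', j'⟩ := d
  rcases Nat.le_total i i' with h | h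
  · exact main (i' - i) i j i' j' hc hd (by omega)
  · exact rtg_symm step_symm (main (i - i') i' j' i j hd hc (by omega))

/-- candidate inner shape for removing a rim hook -/
noncomputable def hookMu (gam : ℕ → ℕ) (M a b x : ℕ) : ℕ → ℕ := fun i =>
  if i < a then gam i else if i < b then gam (i + 1) - 1
  else if i = b then x - (M - 1 - b) else gam i

lemma exists_rimHook_of_beta {gam : ℕ → ℕ} {k M : ℕ} (hk : 1 ≤ k)
    (hganti : Antitone gam) (hM : ∀ i ≥ M, gam i = 0)
    {x : ℕ} (hxk : x + k ∈ bset M gam) (hx : x ∉ bset M gam) :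
    ∃ mu : ℕ → ℕ, IsRimHook gam mu k := by
  obtain ⟨a, haM, haeq⟩ := mem_bset.1 hxk
  have hM1 : 1 ≤ M := by omega
  have hPa : x < bfun M gam a := by omega
  have haM1 : a ≤ M - 1 := by omega
  set b := Nat.findGreatest (fun j => x < bfun M gam j) (M - 1) with hbdef
  have hb : x < bfun M gam b :=
    Nat.findGreatest_spec (P := fun j => x < bfun M gam j) haM1 hPa
  have hab : a ≤ b := Nat.le_findGreatest haM1 hPa
  have hbM : b ≤ M - 1 := Nat.findGreatest_le _
  have hbmax : ∀ j, b < j → bfun M gam j ≤ x := by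
    intro j hj
    by_cases hjM : j ≤ M - 1
    · have := Nat.findGreatest_is_greatest (P := fun j => x < bfun M gam j) hj hjM
      omega
    · have h0 : gam j = 0 := hM j (by omega)
      unfold bfun; omega
  have hever : ∀ j, b < j → j < M → bfun M gam j < x := by
    intro j hj hjM
    have h1 := hbmax j hj
    have h2 : bfun M gam j ≠ x := fun he => hx (mem_bset.2 ⟨j, hjM, he⟩)
    omega
  -- pigeonhole : x ≥ M - 1 - b
  have hpig : M ≤ x + b + 1 := by
    have hcard : ((Finset.Ico (b + 1) M).image (bfun M gam)).card = M - (b + 1) := by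
      rw [Finset.card_image_of_injOn, Nat.card_Ico]
      intro i hi j hj hij
      simp only [Finset.coe_Ico, Set.mem_Ico] at hi hj
      exact bfun_injOn hganti i hi.2 j hj.2 hij
    have hsub : (Finset.Ico (b + 1) M).image (bfun M gam) ⊆ Finset.range x := by
      intro z hz
      obtain ⟨j, hj, rfl⟩ := Finset.mem_image.1 hz
      rw [Finset.mem_Ico] at hj
      exact Finset.mem_range.2 (hever j (by omega) hj.2)
    have := Finset.card_le_card hsub
    rw [hcard, Finset.card_range] at this
    omega
  have f1 : ∀ i, i ≤ b → x + 1 ≤ bfun M gam i := by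
    intro i hi
    have := bfun_le hganti hi (show b < M by omega)
    omega
  have f3 : ∀ i, i ≤ b → 1 ≤ gam i := by
    intro i hi
    have h1 := bfun_le hganti hi (show b < M by omega)
    have h2 : bfun M gam i = gam i + (M - 1 - i) := rfl
    have h3 : bfun M gam b = gam b + (M - 1 - b) := rfl
    omega
  set mu := hookMu gam M a b x with hmudef
  have e1 : ∀ i, i < a ∨ b < i → mu i = gam i := by
    intro i hi
    rw [hmudef]; unfold hookMu
    split_ifs <;> omega
  have e2 : ∀ i, a ≤ i → i < b → mu i + 1 = gam (i + 1) := by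
    intro i hia hib
    have := f3 (i + 1) (by omega)
    rw [hmudef]; unfold hookMu
    split_ifs <;> omega
  have e3 : mu b + (M - 1 - b) = x := by
    rw [hmudef]; unfold hookMu
    split_ifs <;> omega
  have e4 : ∀ i, a ≤ i → i ≤ b → mu i < gam i := by
    intro i hia hib
    rcases Nat.lt_or_ge i b with h | h
    · have h1 := e2 i hia h
      have h2 := hganti (show i ≤ i + 1 by omega)
      omega
    · have hib' : i = b := by omega
      rw [hib']
      have h1 : bfun M gam b = gam b + (M - 1 - b) := rfl
      have := f1 b (le_refl b)
      omega
  have e6 : ∀ i, mu i ≤ gam i := by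
    intro i
    rcases Nat.lt_or_ge i a with h | h
    · rw [e1 i (Or.inl h)]
    rcases le_or_gt i b with h' | h'
    · exact le_of_lt (e4 i h h')
    · rw [e1 i (Or.inr h')]
  have e5 : Antitone mu := by
    refine antitone_nat_of_succ_le ?_
    intro i
    rcases Nat.lt_or_ge (i + 1) a with h | h
    · rw [e1 i (Or.inl (by omega)), e1 (i + 1) (Or.inl h)]
      exact hganti (show i ≤ i + 1 by omega)
    rcases Nat.eq_or_lt_of_le h with h' | h'
    · -- i + 1 = a
      rw [e1 i (Or.inl (by omega))]
      have := e4 (i + 1) (by omega) (by omega)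
      have := hganti (show i ≤ i + 1 by omega)
      rw [← h'] at *
      omega
    rcases Nat.lt_or_ge (i + 1) b with h2 | h2
    · have ha1 := e2 i (by omega) (by omega)
      have ha2 := e2 (i + 1) (by omega) h2
      have := hganti (show i + 1 ≤ i + 1 + 1 by omega)
      omega
    rcases Nat.eq_or_lt_of_le h2 with h3 | h3
    · -- i + 1 = b
      have ha1 := e2 i (by omega) (by omega)
      have ha2 := e4 (i + 1) (by omega) (by omega)
      omega
    rcases Nat.eq_or_lt_of_le h3 with h4 | h4
    · -- i = b
      have hib : i = b := by omega
      rw [hib, e1 (b + 1) (Or.inr (by omega))]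
      rcases Nat.lt_or_ge (b + 1) M with h5 | h5
      · have h6 := hever (b + 1) (by omega) h5
        have h7 : bfun M gam (b + 1) = gam (b + 1) + (M - 1 - (b + 1)) := rfl
        omega
      · have := hM (b + 1) (by omega)
        omega
    · rw [e1 i (Or.inr (by omega)), e1 (i + 1) (Or.inr (by omega))]
      exact hganti (show i ≤ i + 1 by omega)
  have e7 : ∀ i ≥ M, mu i = 0 := by
    intro i hi
    rw [e1 i (Or.inr (by omega))]
    exact hM i hi
  have hrows : ∀ i, mu i < gam i ↔ (a ≤ i ∧ i ≤ b) := by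
    intro i
    constructor
    · intro hlt
      by_contra hcon
      have : i < a ∨ b < i := by omega
      rw [e1 i this] at hlt
      omega
    · intro ⟨h1, h2⟩; exact e4 i h1 h2
  refine ⟨mu, ⟨hganti, M, hM⟩, ⟨e5, M, e7⟩, e6, ?_, ?_, ?_⟩
  · -- card = k
    rw [skew_ncard hM]
    have hsub : ∑ i ∈ Finset.range M, (gam i - mu i) = ∑ i ∈ Finset.Icc a b, (gam i - mu i) := by
      refine (Finset.sum_subset ?_ ?_).symm
      · intro i hi; simp only [Finset.mem_Icc] at hi; simp; omega
      · intro i _ hi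
        simp only [Finset.mem_Icc] at hi
        rw [e1 i (by omega)]
        omega
    have htele := tele hab e6 e2
    have hba : bfun M gam a = gam a + (M - 1 - a) := rfl
    rw [hsub]
    omega
  · -- connected
    refine skew_connected hrows ?_
    intro i h1 h2
    exact ⟨e5 (Nat.le_succ i), by have := e2 i h1 h2; omega⟩
  · -- no square
    rintro ⟨i, j, c1, c2, c3, c4⟩
    rw [mem_skew] at c1 c2 c3 c4
    have hr1 : a ≤ i ∧ i ≤ b := (hrows i).1 (by omega)
    have hr2 : a ≤ i + 1 ∧ i + 1 ≤ b := (hrows (i + 1)).1 (by omega)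
    have := e2 i hr1.1 (by omega)
    omega

/-- parts of a partition encoded by a finite set of distinct beta-numbers -/
noncomputable def partsOf (T : Finset ℕ) : Multiset ℕ :=
  T.val.map (fun t => t - (T.filter (· < t)).card)

lemma partsOf_insert_max {T : Finset ℕ} {b : ℕ} (hb : ∀ t ∈ T, t < b) :
    partsOf (insert b T) = (b - T.card) ::ₘ partsOf T := by
  have hbn : b ∉ T := fun h => absurd (hb b h) (lt_irrefl b)
  unfold partsOf
  rw [Finset.insert_val_of_notMem hbn, Multiset.map_cons]
  congr 1
  · -- part at b
    have : (insert b T).filter (· < b) = T := by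
      ext t
      simp only [Finset.mem_filter, Finset.mem_insert]
      constructor
      · rintro ⟨rfl | ht, hlt⟩
        · omega
        · exact ht
      · intro ht; exact ⟨Or.inr ht, hb t ht⟩
    rw [this]
  · -- other parts unchanged
    refine Multiset.map_congr rfl ?_
    intro t ht
    have htT : t ∈ T := ht
    have : (insert b T).filter (· < t) = T.filter (· < t) := by
      ext s
      simp only [Finset.mem_filter, Finset.mem_insert]
      constructor
      · rintro ⟨rfl | hs, hlt⟩
        · exact absurd (hb t htT) (by omega)
        · exact ⟨hs, hlt⟩
      · intro ⟨hs, hlt⟩; exact ⟨Or.inr hs, hlt⟩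
    rw [this]

lemma part_le_max {T : Finset ℕ} {t bmax : ℕ} (ht : t ∈ T) (hbm : ∀ s ∈ T, s ≤ bmax) :
    t - (T.filter (· < t)).card ≤ bmax - (T.card - 1) := by
  have hpart := Finset.card_filter_add_card_filter_not (s := T) (p := (· < t))
  have hsub : T.filter (fun s => ¬ s < t) ⊆ Finset.Icc t bmax := by
    intro s hs
    rw [Finset.mem_filter] at hs
    rw [Finset.mem_Icc]
    exact ⟨by omega, hbm s hs.1⟩
  have hc := Finset.card_le_card hsub
  rw [Nat.card_Icc] at hc
  have htm : t ∈ T.filter (fun s => ¬ s < t) := Finset.mem_filter.2 ⟨ht, by omega⟩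
  have hpos : 1 ≤ (T.filter (fun s => ¬ s < t)).card := Finset.card_pos.2 ⟨t, htm⟩
  omega

lemma max_part {T : Finset ℕ} {bmax : ℕ} (hbT : bmax ∈ T) (hbm : ∀ s ∈ T, s ≤ bmax) :
    bmax - (T.filter (· < bmax)).card = bmax - (T.card - 1) ∧
      (T.filter (· < bmax)).card = T.card - 1 := by
  have : T.filter (· < bmax) = T.erase bmax := by
    ext s
    simp only [Finset.mem_filter, Finset.mem_erase]
    constructor
    · intro ⟨hs, hlt⟩; exact ⟨by omega, hs⟩
    · intro ⟨hne, hs⟩; have := hbm s hs; exact ⟨hs, by omega⟩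
  rw [this, Finset.card_erase_of_mem hbT]
  exact ⟨rfl, rfl⟩

lemma card_le_of_all_le {T : Finset ℕ} {bmax : ℕ} (hbm : ∀ s ∈ T, s ≤ bmax) :
    T.card ≤ bmax + 1 := by
  have : T ⊆ Finset.range (bmax + 1) := fun s hs => Finset.mem_range.2 (by have := hbm s hs; omega)
  have := Finset.card_le_card this
  rwa [Finset.card_range] at this

lemma partsOf_inj : ∀ n (T T' : Finset ℕ), T.card = n → T'.card = n →
    partsOf T = partsOf T' → T = T' := by
  intro n
  induction n with
  | zero =>
    intro T T' hT hT' _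
    rw [Finset.card_eq_zero] at hT hT'
    rw [hT, hT']
  | succ n ih =>
    intro T T' hT hT' hp
    have hTne : T.Nonempty := Finset.card_pos.1 (by omega)
    have hTne' : T'.Nonempty := Finset.card_pos.1 (by omega)
    obtain ⟨b, hbdef⟩ : ∃ b, b = T.max' hTne := ⟨_, rfl⟩
    obtain ⟨b', hbdef'⟩ : ∃ b', b' = T'.max' hTne' := ⟨_, rfl⟩
    have hbT : b ∈ T := hbdef ▸ T.max'_mem hTne
    have hbT' : b' ∈ T' := hbdef' ▸ T'.max'_mem hTne'
    have hbm : ∀ s ∈ T, s ≤ b := fun s hs => hbdef ▸ T.le_max' s hs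
    have hbm' : ∀ s ∈ T', s ≤ b' := fun s hs => hbdef' ▸ T'.le_max' s hs
    have hbn : b ≥ n := by have := card_le_of_all_le hbm; omega
    have hbn' : b' ≥ n := by have := card_le_of_all_le hbm'; omega
    -- the maximal part
    have hmp := (max_part hbT hbm).2
    have hmp' := (max_part hbT' hbm').2
    have hbmem : b - n ∈ partsOf T := by
      unfold partsOf
      rw [Multiset.mem_map]
      exact ⟨b, hbT, by rw [hmp]; congr 1; omega⟩
    have hbmem' : b' - n ∈ partsOf T' := by
      unfold partsOf
      rw [Multiset.mem_map]
      exact ⟨b', hbT', by rw [hmp']; congr 1; omega⟩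
    have hbb : b = b' := by
      rw [hp] at hbmem
      rw [← hp] at hbmem'
      unfold partsOf at hbmem hbmem'
      rw [Multiset.mem_map] at hbmem hbmem'
      obtain ⟨t, htT, hte⟩ := hbmem
      obtain ⟨t', htT', hte'⟩ := hbmem'
      have l1 : b - n ≤ b' - (T'.card - 1) := hte ▸ part_le_max htT hbm'
      have l2 : b' - n ≤ b - (T.card - 1) := hte' ▸ part_le_max htT' hbm
      omega
    subst hbb
    -- peel off the max
    have hins : T = insert b (T.erase b) := (Finset.insert_erase hbT).symm
    have hins' : T' = insert b (T'.erase b) := (Finset.insert_erase hbT').symm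
    have hcard : (T.erase b).card = n := by rw [Finset.card_erase_of_mem hbT]; omega
    have hcard' : (T'.erase b).card = n := by rw [Finset.card_erase_of_mem hbT']; omega
    have hme : ∀ t ∈ T.erase b, t < b := by
      intro t ht
      rw [Finset.mem_erase] at ht
      have := hbm t ht.2; omega
    have hme' : ∀ t ∈ T'.erase b, t < b := by
      intro t ht
      rw [Finset.mem_erase] at ht
      have := hbm' t ht.2; omega
    have hp1 : partsOf T = (b - n) ::ₘ partsOf (T.erase b) := by
      conv_lhs => rw [hins]
      rw [partsOf_insert_max hme, hcard]
    have hp2 : partsOf T' = (b - n) ::ₘ partsOf (T'.erase b) := by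
      conv_lhs => rw [hins']
      rw [partsOf_insert_max hme', hcard']
    rw [hp1, hp2] at hp
    have := (Multiset.cons_inj_right (b - n)).1 hp
    have herase := ih (T.erase b) (T'.erase b) hcard hcard' this
    rw [hins, hins', herase]

noncomputable def resSet (k r M : ℕ) (lam : ℕ → ℕ) : Finset ℕ :=
  (bset M lam).filter (fun v => v % k = r)

noncomputable def divSet (k r M : ℕ) (lam : ℕ → ℕ) : Finset ℕ :=
  (resSet k r M lam).image (· / k)

lemma div_lt_div_same_mod {k u v : ℕ} (hk : 1 ≤ k) (huv : u % k = v % k) :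
    u < v ↔ u / k < v / k := by
  have h1 := Nat.div_add_mod u k
  have h2 := Nat.div_add_mod v k
  have hmu : u % k < k := Nat.mod_lt u (by omega)
  constructor
  · intro h
    by_contra hc
    have hle : v / k ≤ u / k := by omega
    have := Nat.mul_le_mul_left k hle
    omega
  · intro h
    have hle : u / k + 1 ≤ v / k := by omega
    have := Nat.mul_le_mul_left k hle
    rw [Nat.mul_add, Nat.mul_one] at this
    omega

lemma div_inj_same_mod {k u v : ℕ} (huv : u % k = v % k) (hd : u / k = v / k) : u = v := by
  have h1 := Nat.div_add_mod u k
  have h2 := Nat.div_add_mod v k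
  have h3 : k * (u / k) = k * (v / k) := by rw [hd]
  omega

lemma quotientPart_eq {k r : ℕ} {lam : ℕ → ℕ} (hk : 1 ≤ k) (hanti : Antitone lam) :
    quotientPart k lam r = partsOf (divSet k r (betaLen k lam) lam) := by
  have hbeta : beta k lam = bfun (betaLen k lam) lam := rfl
  set M := betaLen k lam with hM
  set f := bfun M lam with hf
  set I := (Finset.range M).filter (fun i => f i % k = r) with hI
  have hinjI : Set.InjOn f ↑I := by
    intro i hi j hj hij
    simp only [hI, Finset.coe_filter, Set.mem_setOf_eq, Finset.mem_range] at hi hj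
    exact bfun_injOn hanti i hi.1 j hj.1 hij
  have hinjdiv : Set.InjOn (fun i => f i / k) ↑I := by
    intro i hi j hj hij
    simp only [hI, Finset.coe_filter, Set.mem_setOf_eq, Finset.mem_range] at hi hj
    have : f i = f j := div_inj_same_mod (by rw [hi.2, hj.2]) hij
    exact bfun_injOn hanti i hi.1 j hj.1 this
  have hdiv_eq : divSet k r M lam = I.image (fun i => f i / k) := by
    rw [divSet, resSet, bset, Finset.filter_image, Finset.image_image]
    rfl
  have hstep : quotientPart k lam r =
      I.val.map (fun i => f i / k - ((divSet k r M lam).filter (· < f i / k)).card) := by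
    rw [quotientPart]
    refine Multiset.map_congr rfl ?_
    intro i hi
    have hiI : i ∈ I := hi
    simp only [hI, Finset.mem_filter, Finset.mem_range] at hiI
    congr 1
    -- cards agree
    have hA : (Finset.range M).filter
        (fun i' => beta k lam i' % k = r ∧ beta k lam i' < beta k lam i) =
        I.filter (fun i' => f i' < f i) := by
      rw [hI, Finset.filter_filter]
      rfl
    rw [hA]
    have hB : (I.filter (fun i' => f i' < f i)).image (fun i' => f i' / k) =
        (divSet k r M lam).filter (· < f i / k) := by
      rw [hdiv_eq, Finset.filter_image]
      congr 1
      refine Finset.filter_congr ?_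
      intro j hj
      have hjI : j ∈ I := hj
      simp only [hI, Finset.mem_filter, Finset.mem_range] at hjI
      exact div_lt_div_same_mod hk (by rw [hjI.2, hiI.2])
    rw [← hB, Finset.card_image_of_injOn]
    intro x hx y hy hxy
    have hx' : x ∈ I := (Finset.mem_filter.1 hx).1
    have hy' : y ∈ I := (Finset.mem_filter.1 hy).1
    exact hinjdiv hx' hy' hxy
  rw [hstep, partsOf]
  have : (divSet k r M lam).val = I.val.map (fun i => f i / k) := by
    rw [hdiv_eq, Finset.image_val_of_injOn hinjdiv]
  rw [this, Multiset.map_map]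
  rfl

lemma divSet_card {k r M : ℕ} {lam : ℕ → ℕ} :
    (divSet k r M lam).card = (resSet k r M lam).card := by
  rw [divSet, Finset.card_image_of_injOn]
  intro u hu v hv huv
  simp only [resSet, Finset.coe_filter, Set.mem_setOf_eq] at hu hv
  exact div_inj_same_mod (by rw [hu.2, hv.2]) huv

lemma resSet_eq_image {k r M : ℕ} {lam : ℕ → ℕ} :
    resSet k r M lam = (divSet k r M lam).image (fun q => k * q + r) := by
  ext v
  simp only [divSet, Finset.mem_image, resSet, Finset.mem_filter]
  constructor
  · intro ⟨h1, h2⟩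
    refine ⟨v / k, ⟨v, ⟨h1, h2⟩, rfl⟩, ?_⟩
    have := Nat.div_add_mod v k
    omega
  · rintro ⟨q, ⟨w, hw, rfl⟩, rfl⟩
    have := Nat.div_add_mod w k
    obtain ⟨hw1, hw2⟩ := hw
    have hwe : k * (w / k) + r = w := by omega
    rw [hwe]
    exact ⟨hw1, hw2⟩

lemma sum_resSet {k r M : ℕ} {lam : ℕ → ℕ} (hk : 1 ≤ k) :
    ∑ v ∈ resSet k r M lam, v =
      k * (∑ q ∈ divSet k r M lam, q) + r * (divSet k r M lam).card := by
  rw [resSet_eq_image (k := k) (r := r) (M := M) (lam := lam), Finset.sum_image]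
  · rw [Finset.sum_add_distrib, Finset.mul_sum, Finset.sum_const, smul_eq_mul,
      Nat.mul_comm ((divSet k r M lam).card) r]
  · intro q1 _ q2 _ h
    have h2 : k * q1 = k * q2 := by simp only at h; omega
    exact Nat.eq_of_mul_eq_mul_left (by omega) h2

lemma rank_sum (T : Finset ℕ) :
    ∑ t ∈ T, (T.filter (· < t)).card = ∑ i ∈ Finset.range T.card, i := by
  induction T using Finset.induction_on_max with
  | empty => simp
  | insert b s hb ih =>
    have hbn : b ∉ s := fun h => absurd (hb b h) (lt_irrefl b)
    rw [Finset.sum_insert hbn, Finset.card_insert_of_notMem hbn, Finset.sum_range_succ]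
    have h1 : (insert b s).filter (· < b) = s := by
      ext t
      simp only [Finset.mem_filter, Finset.mem_insert]
      constructor
      · rintro ⟨rfl | ht, hlt⟩
        · omega
        · exact ht
      · intro ht; exact ⟨Or.inr ht, hb t ht⟩
    have h2 : ∀ t ∈ s, (insert b s).filter (· < t) = s.filter (· < t) := by
      intro t ht
      ext u
      simp only [Finset.mem_filter, Finset.mem_insert]
      constructor
      · rintro ⟨rfl | hu, hlt⟩
        · exact absurd (hb t ht) (by omega)
        · exact ⟨hu, hlt⟩
      · intro ⟨hu, hlt⟩; exact ⟨Or.inr hu, hlt⟩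
    rw [h1]
    rw [show ∑ x ∈ s, ((insert b s).filter (· < x)).card = ∑ x ∈ s, (s.filter (· < x)).card
      from Finset.sum_congr rfl (fun t ht => by rw [h2 t ht])]
    rw [ih]
    omega

lemma partsOf_sum {T : Finset ℕ} :
    (partsOf T).sum + ∑ i ∈ Finset.range T.card, i = ∑ t ∈ T, t := by
  rw [← rank_sum]
  have : (partsOf T).sum = ∑ t ∈ T, (t - (T.filter (· < t)).card) := rfl
  rw [this, ← Finset.sum_add_distrib]
  refine Finset.sum_congr rfl ?_
  intro t _
  have hle : (T.filter (· < t)).card ≤ t := by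
    have hsub : T.filter (· < t) ⊆ Finset.range t := by
      intro s hs
      rw [Finset.mem_filter] at hs
      exact Finset.mem_range.2 hs.2
    have := Finset.card_le_card hsub
    rwa [Finset.card_range] at this
  omega

lemma sum_bset {lam : ℕ → ℕ} {M : ℕ} (hanti : Antitone lam) (hM : ∀ i ≥ M, lam i = 0) :
    ∑ v ∈ bset M lam, v = msize lam + ∑ i ∈ Finset.range M, (M - 1 - i) := by
  rw [bset, Finset.sum_image (fun x hx y hy h =>
    bfun_injOn hanti x (Finset.mem_range.1 hx) y (Finset.mem_range.1 hy) h)]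
  rw [msize_eq_sum hM, ← Finset.sum_add_distrib]
  rfl

lemma fiber_sum {lam : ℕ → ℕ} {M k : ℕ} (hk : 1 ≤ k) :
    ∑ r ∈ Finset.range k, ∑ v ∈ resSet k r M lam, v = ∑ v ∈ bset M lam, v := by
  simp only [resSet]
  exact Finset.sum_fiberwise_of_maps_to
    (fun v _ => Finset.mem_range.2 (Nat.mod_lt v (by omega))) _

lemma resSet_card_step {lam mu : ℕ → ℕ} {k M : ℕ} (hk : 1 ≤ k) (h : IsRimHook lam mu k)
    (hM : ∀ i ≥ M, lam i = 0) :
    ∀ r, (resSet k r M mu).card = (resSet k r M lam).card := by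
  obtain ⟨y, hyk, hyn, heq⟩ := beta_step hk h hM
  intro r
  have hmod : (y + k) % k = y % k := Nat.add_mod_right y k
  rw [resSet, heq, Finset.filter_insert]
  by_cases hr : y % k = r
  · rw [if_pos hr, Finset.filter_erase]
    have hmem : y + k ∈ (bset M lam).filter (fun v => v % k = r) :=
      Finset.mem_filter.2 ⟨hyk, by rw [hmod, hr]⟩
    have hnotm : y ∉ ((bset M lam).filter (fun v => v % k = r)).erase (y + k) := by
      intro hc
      exact hyn (Finset.mem_filter.1 (Finset.mem_of_mem_erase hc)).1
    rw [Finset.card_insert_of_notMem hnotm, Finset.card_erase_of_mem hmem]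
    have : 1 ≤ ((bset M lam).filter (fun v => v % k = r)).card :=
      Finset.card_pos.2 ⟨y + k, hmem⟩
    rw [resSet]
    omega
  · rw [if_neg hr, Finset.filter_erase, Finset.erase_eq_of_notMem, resSet]
    intro hc
    exact hr (by rw [← hmod]; exact (Finset.mem_filter.1 hc).2)

lemma chain_facts {k M : ℕ} (hk : 1 ≤ k) {lam gam : ℕ → ℕ}
    (hchain : Relation.ReflTransGen (fun a b => IsRimHook a b k) lam gam)
    (hplam : IsPartitionFun lam) (hM : ∀ i ≥ M, lam i = 0) :
    IsPartitionFun gam ∧ (∀ i ≥ M, gam i = 0) ∧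
      (∀ r, (resSet k r M gam).card = (resSet k r M lam).card) := by
  induction hchain with
  | refl => exact ⟨hplam, hM, fun r => rfl⟩
  | @tail b c h1 h2 ih =>
    have h2' := h2
    obtain ⟨hp, hv, hc⟩ := ih
    obtain ⟨_, hpc, hlec, _, _, _⟩ := h2
    have hvc : ∀ i ≥ M, c i = 0 := by
      intro i hi
      have := hlec i
      have := hv i hi
      omega
    refine ⟨hpc, hvc, fun r => ?_⟩
    rw [resSet_card_step hk h2' hv r, hc r]

lemma core_closed {k M : ℕ} (hk : 1 ≤ k) {gam : ℕ → ℕ} (hganti : Antitone gam)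
    (hM : ∀ i ≥ M, gam i = 0) (hno : ¬∃ mu : ℕ → ℕ, IsRimHook gam mu k) :
    ∀ y, y + k ∈ bset M gam → y ∈ bset M gam := by
  intro y hy
  by_contra hyn
  exact hno (exists_rimHook_of_beta hk hganti hM hy hyn)

lemma downclosed_eq_range {Q : Finset ℕ} (h : ∀ q, q + 1 ∈ Q → q ∈ Q) :
    Q = Finset.range Q.card := by
  have hdown : ∀ d q, q ∈ Q → q - d ∈ Q := by
    intro d
    induction d with
    | zero => intro q hq; simpa using hq
    | succ d ih =>
      intro q hq
      have h2 := ih q hq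
      rcases Nat.eq_zero_or_pos (q - d) with h0 | h0
      · have he : q - (d + 1) = q - d := by omega
        rw [he]; exact h2
      · have he : q - d = (q - (d + 1)) + 1 := by omega
        rw [he] at h2
        exact h _ h2
  have hsub : Q ⊆ Finset.range Q.card := by
    intro q hq
    rw [Finset.mem_range]
    by_contra hc
    have hrsub : Finset.range (q + 1) ⊆ Q := by
      intro p hp
      rw [Finset.mem_range] at hp
      have h3 := hdown (q - p) q hq
      have he : q - (q - p) = p := by omega
      rwa [he] at h3
    have := Finset.card_le_card hrsub
    rw [Finset.card_range] at this
    omega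
  exact Finset.eq_of_subset_of_card_le hsub (le_of_eq (Finset.card_range _))

lemma divSet_closed {k r M : ℕ} (hk : 1 ≤ k) (hr : r < k) {gam : ℕ → ℕ}
    (hclosed : ∀ y, y + k ∈ bset M gam → y ∈ bset M gam) :
    divSet k r M gam = Finset.range (divSet k r M gam).card := by
  apply downclosed_eq_range
  intro q hq
  rw [divSet, Finset.mem_image] at hq
  obtain ⟨v, hv, hvq⟩ := hq
  rw [resSet, Finset.mem_filter] at hv
  obtain ⟨hv1, hv2⟩ := hv
  have hd := Nat.div_add_mod v k
  have hkq : k * (q + 1) = k * (v / k) := by rw [hvq]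
  have hkq2 : k * (q + 1) = k * q + k := by ring
  have hyk : (k * q + r) + k = v := by omega
  have hy : k * q + r ∈ bset M gam := hclosed _ (by rw [hyk]; exact hv1)
  rw [divSet, Finset.mem_image]
  refine ⟨k * q + r, ?_, ?_⟩
  · rw [resSet, Finset.mem_filter]
    refine ⟨hy, ?_⟩
    have h1 : (k * q + r) % k = r % k := Nat.mul_add_mod k q r
    rw [h1, Nat.mod_eq_of_lt hr]
  · have h1 : (k * q + r) / k = q + r / k := Nat.mul_add_div (by omega) q r
    rw [h1, Nat.div_eq_of_lt hr]
    omega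

lemma size_formula {k : ℕ} (hk : 1 ≤ k) {lam gam : ℕ → ℕ}
    (hplam : IsPartitionFun lam) (hcore : IsCoreOf k lam gam) :
    msize lam = k * (∑ r ∈ Finset.range k, (quotientPart k lam r).sum) + msize gam := by
  obtain ⟨hchain, hno⟩ := hcore
  set M := betaLen k lam with hMdef
  have hMge : msize lam < M := by
    rw [hMdef, betaLen]
    have := Nat.le_mul_of_pos_left (msize lam + 1) (show 0 < k by omega)
    omega
  have hMlam : ∀ i ≥ M, lam i = 0 := fun i hi => zero_of_ge_msize hplam i (by omega)
  obtain ⟨hpg, hMg, hcards⟩ := chain_facts hk hchain hplam hMlam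
  have hganti := hpg.1
  have hlanti := hplam.1
  have hclosed := core_closed hk hganti hMg hno
  have key : ∀ r < k, k * (quotientPart k lam r).sum + (∑ v ∈ resSet k r M gam, v)
      = ∑ v ∈ resSet k r M lam, v := by
    intro r hr
    have hq := quotientPart_eq (r := r) hk hlanti
    rw [← hMdef] at hq
    have hsum1 : (partsOf (divSet k r M lam)).sum
        + ∑ i ∈ Finset.range (divSet k r M lam).card, i
        = ∑ q ∈ divSet k r M lam, q := partsOf_sum
    have hsum2 := sum_resSet (k := k) (r := r) (M := M) (lam := lam) hk
    have hg := divSet_closed (M := M) hk hr hclosed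
    have hsum3 := sum_resSet (k := k) (r := r) (M := M) (lam := gam) hk
    have hcardeq : (divSet k r M gam).card = (divSet k r M lam).card := by
      rw [divSet_card, divSet_card, hcards r]
    have hsum4 : ∑ q ∈ divSet k r M gam, q
        = ∑ i ∈ Finset.range (divSet k r M lam).card, i := by
      conv_lhs => rw [hg]
      rw [hcardeq]
    rw [hq, hsum2, hsum3, hsum4, hcardeq]
    have hmul : k * ((partsOf (divSet k r M lam)).sum)
        + k * (∑ i ∈ Finset.range (divSet k r M lam).card, i)
        = k * (∑ q ∈ divSet k r M lam, q) := by
      rw [← Nat.mul_add, hsum1]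
    omega
  have hcomb : ∑ r ∈ Finset.range k,
      (k * (quotientPart k lam r).sum + ∑ v ∈ resSet k r M gam, v)
      = ∑ r ∈ Finset.range k, ∑ v ∈ resSet k r M lam, v :=
    Finset.sum_congr rfl (fun r hr => key r (Finset.mem_range.1 hr))
  rw [Finset.sum_add_distrib, fiber_sum hk, fiber_sum hk, ← Finset.mul_sum] at hcomb
  have hsl := sum_bset hlanti hMlam
  have hsg := sum_bset hganti hMg
  omega

lemma rankGt_card {lam : ℕ → ℕ} {M i : ℕ} (hanti : Antitone lam) (hiM : i < M) :
    ((bset M lam).filter (fun z => bfun M lam i < z)).card = i := by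
  have himg : (bset M lam).filter (fun z => bfun M lam i < z)
      = (Finset.range i).image (bfun M lam) := by
    rw [bset, Finset.filter_image]
    congr 1
    ext j
    simp only [Finset.mem_filter, Finset.mem_range]
    constructor
    · rintro ⟨hjM, hlt⟩
      by_contra hc
      rcases Nat.eq_or_lt_of_le (le_of_not_gt hc) with he | hgt
      · rw [he] at hlt; omega
      · have := bfun_lt hanti hgt hjM
        omega
    · intro hj
      exact ⟨by omega, bfun_lt hanti hj hiM⟩
  rw [himg, Finset.card_image_of_injOn, Finset.card_range]
  intro x hx y hy h
  simp only [Finset.coe_range, Set.mem_Iio] at hx hy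
  exact bfun_injOn hanti x (by omega) y (by omega) h

lemma filter_gt_inj {S : Finset ℕ} {y y' : ℕ} (hy : y ∈ S) (hy' : y' ∈ S)
    (h : (S.filter (fun z => y < z)).card = (S.filter (fun z => y' < z)).card) : y = y' := by
  have key : ∀ u v : ℕ, u ∈ S → v ∈ S → u < v →
      (S.filter (fun z => v < z)).card < (S.filter (fun z => u < z)).card := by
    intro u v hu hv huv
    have hsub : insert v (S.filter (fun z => v < z)) ⊆ S.filter (fun z => u < z) := by
      intro z hz
      rcases Finset.mem_insert.1 hz with rfl | hz'
      · exact Finset.mem_filter.2 ⟨hv, huv⟩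
      · obtain ⟨h1, h2⟩ := Finset.mem_filter.1 hz'
        exact Finset.mem_filter.2 ⟨h1, by omega⟩
    have hni : v ∉ S.filter (fun z => v < z) := by
      intro hc
      exact absurd (Finset.mem_filter.1 hc).2 (lt_irrefl v)
    have := Finset.card_le_card hsub
    rw [Finset.card_insert_of_notMem hni] at this
    omega
  rcases lt_trichotomy y y' with hlt | he | hlt
  · have := key y y' hy hy' hlt; omega
  · exact he
  · have := key y' y hy' hy hlt; omega

lemma eq_of_bset_eq {lam lam' : ℕ → ℕ} {M : ℕ} (h1 : Antitone lam) (h2 : Antitone lam')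
    (hs : bset M lam = bset M lam') : ∀ i < M, lam i = lam' i := by
  intro i hiM
  have hy : bfun M lam i ∈ bset M lam' := hs ▸ mem_bset.2 ⟨i, hiM, rfl⟩
  have hy' : bfun M lam' i ∈ bset M lam' := mem_bset.2 ⟨i, hiM, rfl⟩
  have hc1 : ((bset M lam').filter (fun z => bfun M lam i < z)).card = i := by
    rw [← hs]; exact rankGt_card h1 hiM
  have hc2 : ((bset M lam').filter (fun z => bfun M lam' i < z)).card = i := rankGt_card h2 hiM
  have := filter_gt_inj hy hy' (by rw [hc1, hc2])
  unfold bfun at this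
  omega

/-- A partition `λ` is uniquely determined by its `k`-core together with its `k`-quotient,
and `|λ| = k·(|λ^{(0)}| + ⋯ + |λ^{(k-1)}|) + |γ_λ|`. -/
theorem core_quotient_determine (k : ℕ) (hk : 1 ≤ k) :
    (∀ lam lam' gamma : ℕ → ℕ, IsPartitionFun lam → IsPartitionFun lam' →
      IsCoreOf k lam gamma → IsCoreOf k lam' gamma →
      (∀ r < k, quotientPart k lam r = quotientPart k lam' r) → lam = lam') ∧
    (∀ lam gamma : ℕ → ℕ, IsPartitionFun lam → IsCoreOf k lam gamma →
      msize lam = k * (∑ r ∈ Finset.range k, (quotientPart k lam r).sum) + msize gamma) := by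
  constructor
  · intro lam lam' gamma hpl hpl' hcore hcore' hqeq
    have hs := size_formula hk hpl hcore
    have hs' := size_formula hk hpl' hcore'
    have hqsum : ∑ r ∈ Finset.range k, (quotientPart k lam r).sum
        = ∑ r ∈ Finset.range k, (quotientPart k lam' r).sum :=
      Finset.sum_congr rfl (fun r hr => by rw [hqeq r (Finset.mem_range.1 hr)])
    rw [hqsum] at hs
    have hmsize : msize lam = msize lam' := by omega
    have hML : betaLen k lam' = betaLen k lam := by rw [betaLen, betaLen, hmsize]
    have hMge : msize lam < betaLen k lam := by
      rw [betaLen]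
      have := Nat.le_mul_of_pos_left (msize lam + 1) (show 0 < k by omega)
      omega
    have hMge' : msize lam' < betaLen k lam := by omega
    have hMlam : ∀ i ≥ betaLen k lam, lam i = 0 := fun i hi =>
      zero_of_ge_msize hpl i (by omega)
    have hMlam' : ∀ i ≥ betaLen k lam, lam' i = 0 := fun i hi =>
      zero_of_ge_msize hpl' i (by omega)
    obtain ⟨hpg, hMg, hcards⟩ := chain_facts (M := betaLen k lam) hk hcore.1 hpl hMlam
    obtain ⟨hpg', hMg', hcards'⟩ := chain_facts (M := betaLen k lam) hk hcore'.1 hpl' hMlam'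
    have hcard_rs : ∀ r, (resSet k r (betaLen k lam) lam).card
        = (resSet k r (betaLen k lam) lam').card := fun r => by
      rw [← hcards r, hcards' r]
    have hdiv : ∀ r < k, divSet k r (betaLen k lam) lam = divSet k r (betaLen k lam) lam' := by
      intro r hr
      have e1 := quotientPart_eq (r := r) hk hpl.1
      have e2 := quotientPart_eq (r := r) hk hpl'.1
      rw [hML] at e2
      refine partsOf_inj ((divSet k r (betaLen k lam) lam).card) _ _ rfl ?_ ?_
      · rw [divSet_card, divSet_card, hcard_rs r]
      · rw [← e1, ← e2, hqeq r hr]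
    have hres : ∀ r < k, resSet k r (betaLen k lam) lam = resSet k r (betaLen k lam) lam' := by
      intro r hr
      rw [resSet_eq_image, resSet_eq_image, hdiv r hr]
    have hbs : bset (betaLen k lam) lam = bset (betaLen k lam) lam' := by
      ext v
      have hmod : v % k < k := Nat.mod_lt v (by omega)
      have m1 : v ∈ bset (betaLen k lam) lam ↔ v ∈ resSet k (v % k) (betaLen k lam) lam := by
        rw [resSet, Finset.mem_filter]; simp
      have m2 : v ∈ bset (betaLen k lam) lam' ↔ v ∈ resSet k (v % k) (betaLen k lam) lam' := by
        rw [resSet, Finset.mem_filter]; simp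
      rw [m1, m2, hres _ hmod]
    funext i
    rcases Nat.lt_or_ge i (betaLen k lam) with hi | hi
    · exact eq_of_bset_eq hpl.1 hpl'.1 hbs i hi
    · rw [hMlam i hi, hMlam' i hi]
  · intro lam gamma hpl hcore
    exact size_formula hk hpl hcore
end

section
/- The k-core of a partition λ is well-defined: any two maximal sequences of removals of k-rim hooks from λ terminate at the same partition. -/
open scoped Classical

noncomputable section

namespace CoreWD

def beta (lam : ℕ → ℕ) (i : ℕ) : ℤ := (lam i : ℤ) - i

def bset (lam : ℕ → ℕ) : Set ℤ := Set.range (beta lam)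

lemma beta_succ_lt {lam : ℕ → ℕ} (h : IsPartitionFun lam) (i : ℕ) :
    beta lam (i+1) < beta lam i := by
  have : lam (i+1) ≤ lam i := h.1 (by omega)
  unfold beta; push_cast; omega

lemma beta_strictAnti {lam : ℕ → ℕ} (h : IsPartitionFun lam) : StrictAnti (beta lam) :=
  strictAnti_nat_of_succ_lt (beta_succ_lt h)

lemma beta_gap {lam : ℕ → ℕ} (h : IsPartitionFun lam) {i j : ℕ} (hij : i ≤ j) :
    beta lam j ≤ beta lam i - (j - i : ℕ) := by
  induction j with
  | zero => simp_all
  | succ n ih =>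
    rcases Nat.lt_or_ge i (n+1) with hlt | hge
    · have h1 := ih (by omega)
      have h2 := beta_succ_lt h n
      have : ((n + 1 - i : ℕ) : ℤ) = ((n - i : ℕ) : ℤ) + 1 := by
        have : i ≤ n := by omega
        push_cast [Nat.sub_add_comm this]  -- may fail; fix
        omega
      omega
    · have : i = n + 1 := by omega
      subst this; simp

lemma beta_le_zero {lam : ℕ → ℕ} (h : IsPartitionFun lam) (i : ℕ) :
    beta lam i ≤ beta lam 0 - i := by
  simpa using beta_gap h (Nat.zero_le i)

lemma bset_cofinite_below {lam : ℕ → ℕ} (h : IsPartitionFun lam) :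
    ∃ N : ℕ, ∀ x : ℤ, x < -(N:ℤ) → x ∈ bset lam := by
  obtain ⟨N, hN⟩ := h.2
  refine ⟨N, fun x hx => ?_⟩
  refine ⟨(-x).toNat, ?_⟩
  have h1 : (N:ℤ) ≤ (-x).toNat := by omega
  have h2 : lam (-x).toNat = 0 := hN _ (by exact_mod_cast h1)
  unfold beta; rw [h2]; omega

lemma bset_finite_above {lam : ℕ → ℕ} (h : IsPartitionFun lam) (t : ℤ) :
    {x : ℤ | x ∈ bset lam ∧ t ≤ x}.Finite := by
  have hsub : {x : ℤ | x ∈ bset lam ∧ t ≤ x} ⊆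
      beta lam '' {i : ℕ | (i:ℤ) ≤ beta lam 0 - t} := by
    rintro x ⟨⟨i, rfl⟩, hx⟩
    exact ⟨i, by have := beta_le_zero h i; simp only [Set.mem_setOf_eq]; omega, rfl⟩
  refine Set.Finite.subset (Set.Finite.image _ ?_) hsub
  have : {i : ℕ | (i:ℤ) ≤ beta lam 0 - t} ⊆ Set.Iic (beta lam 0 - t).toNat := by
    intro i hi; simp only [Set.mem_setOf_eq] at hi; simp [Set.mem_Iic]; omega
  exact Set.Finite.subset (Set.finite_Iic _) this

lemma strictAnti_range_eq {f g : ℕ → ℤ} (hf : StrictAnti f) (hg : StrictAnti g)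
    (h : Set.range f = Set.range g) : f = g := by
  have key : ∀ n, f n = g n := by
    intro n
    induction n using Nat.strong_induction_on with
    | _ n ih =>
      by_contra hne
      rcases lt_or_gt_of_ne hne with hlt | hlt
      · obtain ⟨j, hj⟩ : g n ∈ Set.range f := h ▸ Set.mem_range_self n
        have hjn : j < n := by
          by_contra hc
          have := hf.antitone (not_lt.mp hc)
          omega
        have := ih j hjn
        have := hg hjn
        omega
      · obtain ⟨j, hj⟩ : f n ∈ Set.range g := h.symm ▸ Set.mem_range_self n
        have hjn : j < n := by
          by_contra hc
          have := hg.antitone (not_lt.mp hc)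
          omega
        have := ih j hjn
        have := hf hjn
        omega
  funext n; exact key n

lemma bset_inj {lam mu : ℕ → ℕ} (hl : IsPartitionFun lam) (hm : IsPartitionFun mu)
    (h : bset lam = bset mu) : lam = mu := by
  have := strictAnti_range_eq (beta_strictAnti hl) (beta_strictAnti hm) h
  funext i
  have : beta lam i = beta mu i := congrFun this i
  unfold beta at this; omega

end CoreWD
namespace CoreWD

def MoveTo (k : ℕ) (S S' : Set ℤ) : Prop :=
  ∃ b, b ∈ S ∧ b - (k:ℤ) ∉ S ∧ S' = insert (b - (k:ℤ)) (S \ {b})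

def Terminal (k : ℕ) (S : Set ℤ) : Prop := ∀ x ∈ S, x - (k:ℤ) ∈ S

def cnt (k : ℕ) (S : Set ℤ) (r t : ℤ) : ℕ :=
  {x : ℤ | x ∈ S ∧ t ≤ x ∧ (k:ℤ) ∣ x - r}.ncard

def EqCnt (k : ℕ) (S S' : Set ℤ) : Prop :=
  ∀ r : ℤ, ∃ t₀ : ℤ, ∀ t ≤ t₀, cnt k S r t = cnt k S' r t

lemma eqcnt_refl (k : ℕ) (S : Set ℤ) : EqCnt k S S := fun r => ⟨0, fun _ _ => rfl⟩

lemma eqcnt_symm {k : ℕ} {S S' : Set ℤ} (h : EqCnt k S S') : EqCnt k S' S := by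
  intro r; obtain ⟨t₀, ht⟩ := h r; exact ⟨t₀, fun t htt => (ht t htt).symm⟩

lemma eqcnt_trans {k : ℕ} {S S' S'' : Set ℤ} (h : EqCnt k S S') (h' : EqCnt k S' S'') :
    EqCnt k S S'' := by
  intro r
  obtain ⟨t₀, ht⟩ := h r; obtain ⟨t₁, ht'⟩ := h' r
  exact ⟨min t₀ t₁, fun t htt => ((ht t (le_trans htt (min_le_left _ _))).trans
    (ht' t (le_trans htt (min_le_right _ _))))⟩

lemma eqcnt_of_move {k : ℕ} (hk : 1 ≤ k) {S S' : Set ℤ}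
    (hfin : ∀ t : ℤ, {x : ℤ | x ∈ S ∧ t ≤ x}.Finite)
    (h : MoveTo k S S') : EqCnt k S S' := by
  obtain ⟨b, hbS, hbk, rfl⟩ := h
  intro r
  refine ⟨b - k, fun t htt => ?_⟩
  by_cases hdvd : (k:ℤ) ∣ b - r
  · -- counts equal by replace b with b-k
    have hA : {x : ℤ | x ∈ S ∧ t ≤ x ∧ (k:ℤ) ∣ x - r}.Finite :=
      (hfin t).subset (fun x hx => ⟨hx.1, hx.2.1⟩)
    have hset : {x : ℤ | x ∈ insert (b - (k:ℤ)) (S \ {b}) ∧ t ≤ x ∧ (k:ℤ) ∣ x - r}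
        = insert (b - (k:ℤ)) ({x : ℤ | x ∈ S ∧ t ≤ x ∧ (k:ℤ) ∣ x - r} \ {b}) := by
      ext x
      simp only [Set.mem_insert_iff, Set.mem_diff, Set.mem_setOf_eq, Set.mem_singleton_iff]
      constructor
      · rintro ⟨hx1 | ⟨hxS, hxb⟩, hx2, hx3⟩
        · exact Or.inl hx1
        · exact Or.inr ⟨⟨hxS, hx2, hx3⟩, hxb⟩
      · rintro (rfl | ⟨⟨hxS, hx2, hx3⟩, hxb⟩)
        · refine ⟨Or.inl rfl, htt, ?_⟩
          have : (k:ℤ) ∣ (b - r) - k := by exact dvd_sub hdvd ⟨1, by ring⟩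
          convert this using 1; ring
        · exact ⟨Or.inr ⟨hxS, hxb⟩, hx2, hx3⟩
    unfold cnt
    rw [hset]
    have hbmem : b ∈ {x : ℤ | x ∈ S ∧ t ≤ x ∧ (k:ℤ) ∣ x - r} := ⟨hbS, by omega, hdvd⟩
    have hbknot : b - (k:ℤ) ∉ {x : ℤ | x ∈ S ∧ t ≤ x ∧ (k:ℤ) ∣ x - r} \ {b} := by
      rintro ⟨⟨hc, -, -⟩, -⟩; exact hbk hc
    rw [Set.ncard_insert_of_notMem hbknot hA.diff]
    have h2 := Set.ncard_diff_singleton_add_one hbmem hA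
    omega
  · -- sets are literally equal
    unfold cnt
    congr 1
    ext x
    constructor
    · rintro ⟨hxS, hx2, hx3⟩
      have hxb : x ≠ b := by rintro rfl; exact hdvd hx3
      exact ⟨Or.inr ⟨hxS, hxb⟩, hx2, hx3⟩
    · rintro ⟨hx1, hx2, hx3⟩
      rcases hx1 with hx1 | hx1
      · exfalso; apply hdvd
        subst hx1
        have : (k:ℤ) ∣ (b - k - r) + k := dvd_add hx3 ⟨1, by ring⟩
        convert this using 1; ring
      · exact ⟨hx1.1, hx2, hx3⟩

end CoreWD
namespace CoreWD

lemma term_iter {k : ℕ} {T : Set ℤ} (hT : Terminal k T) {c : ℤ} (hc : c ∈ T) :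
    ∀ j : ℕ, c - (j:ℤ) * k ∈ T := by
  intro j
  induction j with
  | zero => simpa using hc
  | succ n ih =>
    have := hT _ ih
    have he : c - ((n:ℤ)+1) * k = (c - (n:ℤ)*k) - k := by ring
    rw [show ((n+1:ℕ):ℤ) = (n:ℤ)+1 by push_cast; ring, he]
    exact this

lemma class_count {k : ℕ} (hk : 1 ≤ k) {T : Set ℤ} (hterm : Terminal k T) {x c t : ℤ}
    (hc : c ∈ T) (hdvdc : (k:ℤ) ∣ c - x) (hub : ∀ y ∈ T, (k:ℤ) ∣ y - x → y ≤ c)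
    (ht : t ≤ c) (hdvdt : (k:ℤ) ∣ c - t) :
    cnt k T x t = ((c - t) / k).toNat + 1 := by
  set J : ℕ := ((c - t) / k).toNat with hJ
  have hkpos : (0:ℤ) < k := by exact_mod_cast hk
  have hJk : (J:ℤ) * k = c - t := by
    obtain ⟨d, hd⟩ := hdvdt
    have hd0 : 0 ≤ d := by nlinarith
    have : (c - t) / k = d := by rw [hd]; exact Int.mul_ediv_cancel_left d (by omega)
    rw [hJ, this, Int.toNat_of_nonneg hd0]; rw [hd]; ring
  have hset : {y : ℤ | y ∈ T ∧ t ≤ y ∧ (k:ℤ) ∣ y - x} =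
      (fun j : ℕ => c - (j:ℤ) * k) '' (Set.Iic J) := by
    ext y
    constructor
    · rintro ⟨hyT, hty, hyx⟩
      have hyc : y ≤ c := hub y hyT hyx
      have hdvdcy : (k:ℤ) ∣ c - y := by
        have : c - y = (c - x) - (y - x) := by ring
        rw [this]; exact dvd_sub hdvdc hyx
      obtain ⟨d, hd⟩ := hdvdcy
      rw [mul_comm] at hd
      have hd0 : 0 ≤ d := by nlinarith
      refine ⟨d.toNat, ?_, ?_⟩
      · simp only [Set.mem_Iic]
        have : d * (k:ℤ) ≤ (J:ℤ) * k := by omega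
        have : d ≤ (J:ℤ) := by
          by_contra hcon
          push_neg at hcon
          nlinarith
        omega
      · simp only
        rw [Int.toNat_of_nonneg hd0]; omega
    · rintro ⟨j, hj, rfl⟩
      simp only [Set.mem_Iic] at hj
      refine ⟨term_iter hterm hc j, ?_, ?_⟩
      · show t ≤ c - (j:ℤ) * k
        have : (j:ℤ) * k ≤ (J:ℤ) * k := by
          apply mul_le_mul_of_nonneg_right _ (le_of_lt hkpos)
          exact_mod_cast hj
        omega
      · show (k:ℤ) ∣ (c - (j:ℤ)*k) - x
        have : (c - (j:ℤ)*k) - x = (c - x) - (j:ℤ)*k := by ring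
        rw [this]
        exact dvd_sub hdvdc (dvd_mul_left _ _)
  unfold cnt
  rw [hset]
  have hinj : Function.Injective (fun j : ℕ => c - (j:ℤ) * k) := by
    intro i j hij
    simp only at hij
    have : (i:ℤ) * k = (j:ℤ) * k := by omega
    have := mul_right_cancel₀ (by omega : (k:ℤ) ≠ 0) this
    exact_mod_cast this
  rw [Set.ncard_image_of_injective _ hinj]
  rw [← Finset.coe_Iic, Set.ncard_coe_finset]
  simp [hJ]

lemma terminal_subset {k : ℕ} (hk : 1 ≤ k) {T T' : Set ℤ}
    (htT : Terminal k T) (htT' : Terminal k T')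
    (hfT : ∀ t : ℤ, {x : ℤ | x ∈ T ∧ t ≤ x}.Finite)
    (hfT' : ∀ t : ℤ, {x : ℤ | x ∈ T' ∧ t ≤ x}.Finite)
    (hcT' : ∃ N : ℕ, ∀ x : ℤ, x < -(N:ℤ) → x ∈ T')
    (heq : EqCnt k T T') : T ⊆ T' := by
  intro x hx
  by_contra hxT'
  have hkpos : (0:ℤ) < k := by exact_mod_cast hk
  -- max of class of x in T
  have hAfin : {y : ℤ | y ∈ T ∧ x ≤ y ∧ (k:ℤ) ∣ y - x}.Finite :=
    (hfT x).subset (fun y hy => ⟨hy.1, hy.2.1⟩)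
  have hAne : {y : ℤ | y ∈ T ∧ x ≤ y ∧ (k:ℤ) ∣ y - x}.Nonempty := ⟨x, hx, le_refl x, ⟨0, by ring⟩⟩
  set Afin := hAfin.toFinset with hAf
  have hAne' : Afin.Nonempty := by rwa [hAf, Set.Finite.toFinset_nonempty]
  set c := Afin.max' hAne' with hcdef
  have hcA : c ∈ Afin := Afin.max'_mem hAne'
  rw [hAf, Set.Finite.mem_toFinset] at hcA
  obtain ⟨hcT, hxc, hcdvd⟩ := hcA
  have hub : ∀ y ∈ T, (k:ℤ) ∣ y - x → y ≤ c := by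
    intro y hy hdy
    rcases le_or_gt x y with h1 | h1
    · apply Finset.le_max'
      rw [hAf, Set.Finite.mem_toFinset]
      exact ⟨hy, h1, hdy⟩
    · omega
  -- element of class of x in T'
  obtain ⟨N', hN'⟩ := hcT'
  set j₀ : ℕ := (x + N' + 1).toNat with hj₀
  have hj₀k : (j₀:ℤ) ≤ (j₀:ℤ) * k := by
    have h0 : (0:ℤ) ≤ (j₀:ℤ) := by positivity
    nlinarith
  set w : ℤ := x - (j₀:ℤ) * k with hw
  have hwT' : w ∈ T' := by
    apply hN'
    rw [hw]
    have : (x + N' + 1 : ℤ) ≤ (j₀:ℤ) ∨ (x + N' + 1 : ℤ) ≤ 0 := by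
      rw [hj₀]; omega
    omega
  have hwdvd : (k:ℤ) ∣ w - x := ⟨-(j₀:ℤ), by rw [hw]; ring⟩
  have hA'fin : {y : ℤ | y ∈ T' ∧ w ≤ y ∧ (k:ℤ) ∣ y - x}.Finite :=
    (hfT' w).subset (fun y hy => ⟨hy.1, hy.2.1⟩)
  have hA'ne : {y : ℤ | y ∈ T' ∧ w ≤ y ∧ (k:ℤ) ∣ y - x}.Nonempty := ⟨w, hwT', le_refl w, hwdvd⟩
  set A'fin := hA'fin.toFinset with hA'f
  have hA'ne' : A'fin.Nonempty := by rwa [hA'f, Set.Finite.toFinset_nonempty]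
  set c' := A'fin.max' hA'ne' with hc'def
  have hc'A : c' ∈ A'fin := A'fin.max'_mem hA'ne'
  rw [hA'f, Set.Finite.mem_toFinset] at hc'A
  obtain ⟨hc'T', hwc', hc'dvd⟩ := hc'A
  have hub' : ∀ y ∈ T', (k:ℤ) ∣ y - x → y ≤ c' := by
    intro y hy hdy
    rcases le_or_gt w y with h1 | h1
    · apply Finset.le_max'
      rw [hA'f, Set.Finite.mem_toFinset]
      exact ⟨hy, h1, hdy⟩
    · omega
  -- x ∉ T' forces c' < x
  have hc'x : c' < x := by
    by_contra hcon
    push_neg at hcon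
    obtain ⟨d, hd⟩ := hc'dvd
    rw [mul_comm] at hd
    have hd0 : 0 ≤ d := by nlinarith
    have h3 : ((d.toNat : ℤ)) = d := Int.toNat_of_nonneg hd0
    have : x = c' - (d.toNat:ℤ) * k := by rw [h3]; omega
    rw [this] at hxT'
    exact hxT' (term_iter htT' hc'T' d.toNat)
  -- c' ≤ c - k
  have hdcc' : (k:ℤ) ∣ c - c' := by
    have : c - c' = (c - x) - (c' - x) := by ring
    rw [this]; exact dvd_sub hcdvd hc'dvd
  have hcc' : c' + k ≤ c := by
    obtain ⟨d, hd⟩ := hdcc'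
    rw [mul_comm] at hd
    have : 0 < d := by nlinarith
    nlinarith
  -- choose t
  obtain ⟨t₀, ht₀⟩ := heq x
  set J : ℕ := (c - min t₀ c').toNat with hJdef
  set t : ℤ := c - (J:ℤ) * k with htdef
  have hJc : (J:ℤ) ≥ c - min t₀ c' := by rw [hJdef]; omega
  have hJk' : (J:ℤ) ≤ (J:ℤ) * k := by nlinarith [(by positivity : (0:ℤ) ≤ (J:ℤ))]
  have htle : t ≤ min t₀ c' := by rw [htdef]; omega
  have htc : t ≤ c := by omega
  have hdct : (k:ℤ) ∣ c - t := ⟨(J:ℤ), by rw [htdef]; ring⟩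
  have hcount := ht₀ t (le_trans htle (min_le_left _ _))
  have hdc't : (k:ℤ) ∣ c' - t := by
    have : c' - t = (c - t) - (c - c') := by ring
    rw [this]; exact dvd_sub hdct hdcc'
  have h1 := class_count hk htT hcT hcdvd hub htc hdct
  have h2 := class_count hk htT' hc'T' hc'dvd hub' (by omega : t ≤ c') hdc't
  rw [h1, h2] at hcount
  -- derive contradiction: (c - t)/k > (c' - t)/k
  have e1 : (c - t) / k = (J:ℤ) := by
    rw [show c - t = (J:ℤ) * k by omega]; exact Int.mul_ediv_cancel _ (by omega)
  obtain ⟨d, hd⟩ := hdc't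
  have e2 : (c' - t) / k = d := by rw [hd]; exact Int.mul_ediv_cancel_left _ (by omega)
  rw [mul_comm] at hd
  have hd0 : 0 ≤ d := by
    by_contra hcon
    push_neg at hcon
    have h5 : d * (k:ℤ) ≤ (-1) * k := by
      apply mul_le_mul_of_nonneg_right _ (le_of_lt hkpos)
      omega
    omega
  have hdJ : d < (J:ℤ) := by
    by_contra hcon
    push_neg at hcon
    have h5 : (J:ℤ) * k ≤ d * k := by
      apply mul_le_mul_of_nonneg_right hcon (le_of_lt hkpos)
    omega
  rw [e1, e2] at hcount
  omega

end CoreWD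
namespace CoreWD

def skF (lam mu : ℕ → ℕ) (N : ℕ) : Finset (ℕ × ℕ) :=
  (Finset.range N).biUnion (fun i => {i} ×ˢ Finset.Ico (mu i) (lam i))

lemma skew_eq_skF {lam mu : ℕ → ℕ} {N : ℕ} (hN : ∀ i, i ≥ N → lam i = 0) :
    skewCells lam mu = ↑(skF lam mu N) := by
  ext ⟨i, j⟩
  simp only [skewCells, Set.mem_setOf_eq, skF, Finset.coe_biUnion, Finset.mem_coe,
    Finset.mem_biUnion, Finset.mem_range, Finset.mem_product, Finset.mem_singleton,
    Finset.mem_Ico, Set.mem_iUnion]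
  constructor
  · rintro ⟨h1, h2⟩
    refine ⟨i, ?_, rfl, h1, h2⟩
    by_contra hc
    push_neg at hc
    have := hN i hc
    omega
  · rintro ⟨i', _, rfl, h1, h2⟩
    exact ⟨h1, h2⟩

lemma skF_card (lam mu : ℕ → ℕ) (N : ℕ) :
    (skF lam mu N).card = ∑ i ∈ Finset.range N, (lam i - mu i) := by
  unfold skF
  rw [Finset.card_biUnion]
  · apply Finset.sum_congr rfl
    intro i _
    rw [Finset.card_product, Finset.card_singleton, Nat.card_Ico, one_mul]
  · intro i _ j _ hij
    simp only [Finset.disjoint_left, Finset.mem_product, Finset.mem_singleton]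
    rintro ⟨a, b⟩ ⟨rfl, -⟩ ⟨rfl, -⟩
    exact hij rfl

lemma skew_ncard_eq {lam mu : ℕ → ℕ} {N : ℕ} (hN : ∀ i, i ≥ N → lam i = 0) :
    (skewCells lam mu).ncard = ∑ i ∈ Finset.range N, (lam i - mu i) := by
  rw [skew_eq_skF hN, Set.ncard_coe_finset, skF_card]

lemma sum_sub_cast {lam mu : ℕ → ℕ} (hle : ∀ i, mu i ≤ lam i) (N : ℕ) :
    ((∑ i ∈ Finset.range N, (lam i - mu i) : ℕ) : ℤ)
      = ∑ i ∈ Finset.range N, ((lam i : ℤ) - (mu i : ℤ)) := by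
  rw [Nat.cast_sum]
  exact Finset.sum_congr rfl (fun i _ => by
    have := hle i; push_cast [Nat.cast_sub this]; ring)

lemma telescope (F G : ℕ → ℤ) (a : ℕ) :
    ∀ b, a ≤ b → (∀ i, a ≤ i → i < b → G i = F (i+1)) →
    ∑ i ∈ Finset.Icc a b, (F i - G i) = F a - G b := by
  intro b hab
  induction b, hab using Nat.le_induction with
  | base =>
    intro _
    simp
  | succ b hab ih =>
    intro hG
    rw [Finset.sum_Icc_succ_top (by omega : a ≤ b + 1)]
    rw [ih (fun i h1 h2 => hG i h1 (by omega))]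
    rw [hG b hab (by omega)]
    ring

lemma mem_skew {lam mu : ℕ → ℕ} {i j : ℕ} :
    (i, j) ∈ skewCells lam mu ↔ mu i ≤ j ∧ j < lam i := Iff.rfl

abbrev RR (S : Set (ℕ × ℕ)) : (ℕ × ℕ) → (ℕ × ℕ) → Prop :=
  fun x y => x ∈ S ∧ y ∈ S ∧ AdjCell x y

lemma RR_symm (S : Set (ℕ × ℕ)) : Symmetric (RR S) := by
  rintro x y ⟨h1, h2, h3⟩
  refine ⟨h2, h1, ?_⟩
  unfold AdjCell at *
  tauto

lemma path_symm {S : Set (ℕ × ℕ)} {c d : ℕ × ℕ}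
    (h : Relation.ReflTransGen (RR S) c d) : Relation.ReflTransGen (RR S) d c :=
  (@Relation.ReflTransGen.symmetric _ (RR S) ⟨fun _ _ h => RR_symm S h⟩).symm _ _ h

lemma rows_of_path {S : Set (ℕ × ℕ)} {c d : ℕ × ℕ}
    (h : Relation.ReflTransGen (RR S) c d) (hc : c ∈ S) :
    ∀ m, c.1 ≤ m → m ≤ d.1 → ∃ j, (m, j) ∈ S := by
  induction h with
  | refl =>
    intro m h1 h2
    have : m = c.1 := le_antisymm h2 h1
    subst this
    exact ⟨c.2, hc⟩
  | @tail e d' p step ih =>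
    intro m h1 h2
    obtain ⟨e1, e2⟩ := e
    obtain ⟨d1, d2⟩ := d'
    obtain ⟨heS, hdS, hadj⟩ := step
    simp only at h2
    rcases le_or_gt m e1 with hme | hme
    · exact ih m h1 hme
    · rcases hadj with ⟨hr, -⟩ | ⟨-, hrow⟩
      · simp only at hr; omega
      · simp only at hrow
        have : m = d1 := by omega
        subst this
        exact ⟨d2, hdS⟩

lemma cross_of_path {S : Set (ℕ × ℕ)} {i : ℕ} {c d : ℕ × ℕ}
    (h : Relation.ReflTransGen (RR S) c d) (hc1 : c.1 ≤ i) :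
    d.1 ≤ i ∨ ∃ j, (i, j) ∈ S ∧ (i+1, j) ∈ S := by
  induction h with
  | refl => exact Or.inl hc1
  | @tail e d' p step ih =>
    rcases ih with hle | hj
    · obtain ⟨e1, e2⟩ := e
      obtain ⟨d1, d2⟩ := d'
      obtain ⟨heS, hdS, hadj⟩ := step
      simp only at hle
      rcases hadj with ⟨hr, -⟩ | ⟨hcol, hrow⟩
      · simp only at hr; left; simp only; omega
      · simp only at hcol hrow
        rcases le_or_gt d1 i with hd | hd
        · exact Or.inl hd
        · right
          have h1 : e1 = i := by omega
          have h2 : d1 = i + 1 := by omega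
          subst h1; subst h2
          exact ⟨e2, heS, hcol ▸ hdS⟩
    · exact Or.inr hj

lemma row_path {S : Set (ℕ × ℕ)} {i lo hi : ℕ}
    (hrow : ∀ j, lo ≤ j → j < hi → (i, j) ∈ S) :
    ∀ j j', lo ≤ j → lo ≤ j' → j < hi → j' < hi →
      Relation.ReflTransGen (RR S) (i, j) (i, j') := by
  have mono : ∀ j j', lo ≤ j → j ≤ j' → j' < hi →
      Relation.ReflTransGen (RR S) (i, j) (i, j') := by
    intro j j' hj hjj'
    induction j', hjj' using Nat.le_induction with
    | base => intro _; exact Relation.ReflTransGen.refl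
    | succ j' hjj' ih =>
      intro hj'hi
      exact Relation.ReflTransGen.tail (ih (by omega))
        ⟨hrow _ (by omega) (by omega), hrow _ (by omega) hj'hi,
          Or.inl ⟨rfl, Or.inl rfl⟩⟩
  intro j j' h1 h2 h3 h4
  rcases le_or_gt j j' with h | h
  · exact mono j j' h1 h h4
  · exact path_symm (mono j' j h2 (by omega) h3)

end CoreWD
namespace CoreWD

lemma move_of_rimhook {k : ℕ} (hk : 1 ≤ k) {lam mu : ℕ → ℕ}
    (hrh : IsRimHook lam mu k) : MoveTo k (bset lam) (bset mu) := by
  obtain ⟨hplam, hpmu, hle, hcard, hconn, hsq⟩ := hrh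
  obtain ⟨N, hN⟩ := hplam.2
  classical
  set OF : Finset ℕ := (Finset.range N).filter (fun i => mu i < lam i) with hOF
  have hmemOF : ∀ i, i ∈ OF ↔ mu i < lam i := by
    intro i
    rw [hOF, Finset.mem_filter, Finset.mem_range]
    constructor
    · tauto
    · intro h
      refine ⟨?_, h⟩
      by_contra hc
      push_neg at hc
      have := hN i hc
      omega
  have hsne : (skewCells lam mu).Nonempty := by
    rw [skew_eq_skF hN]
    have h1 : (skewCells lam mu).ncard = k := hcard
    rw [skew_eq_skF hN, Set.ncard_coe_finset] at h1
    obtain ⟨c, hc⟩ := Finset.card_pos.mp (by omega : 0 < (skF lam mu N).card)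
    exact ⟨c, hc⟩
  obtain ⟨c0, hc0⟩ := hsne
  have hOFne : OF.Nonempty := by
    refine ⟨c0.1, (hmemOF c0.1).mpr ?_⟩
    obtain ⟨h1, h2⟩ := hc0
    omega
  set a := OF.min' hOFne with ha
  set b := OF.max' hOFne with hb
  have hab : a ≤ b := Finset.min'_le _ _ (OF.max'_mem hOFne)
  have hOa : mu a < lam a := (hmemOF a).mp (OF.min'_mem hOFne)
  have hOb : mu b < lam b := (hmemOF b).mp (OF.max'_mem hOFne)
  have hbN : b < N := by
    by_contra hc
    push_neg at hc
    have := hN b hc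
    omega
  have hk' : (1:ℤ) ≤ (k:ℤ) := by exact_mod_cast hk
  have hca : ((a, mu a) : ℕ × ℕ) ∈ skewCells lam mu := mem_skew.mpr ⟨le_refl _, hOa⟩
  have hcb : ((b, mu b) : ℕ × ℕ) ∈ skewCells lam mu := mem_skew.mpr ⟨le_refl _, hOb⟩
  -- all rows in [a,b] are occupied
  have hOcc : ∀ i, a ≤ i → i ≤ b → mu i < lam i := by
    intro i h1 h2
    have hpath := hconn _ hca _ hcb
    obtain ⟨j, hj⟩ := rows_of_path hpath hca i h1 h2
    rw [mem_skew] at hj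
    omega
  have hOut : ∀ i, i < a ∨ b < i → mu i = lam i := by
    intro i hi
    have : i ∉ OF := by
      intro hmem
      have h1 := OF.min'_le i hmem
      have h2 := OF.le_max' i hmem
      omega
    rw [hmemOF] at this
    have := hle i
    omega
  -- consecutive rows
  have hCons : ∀ i, a ≤ i → i < b → lam (i+1) = mu i + 1 := by
    intro i h1 h2
    have hi : mu i < lam i := hOcc i h1 (by omega)
    have hi1 : mu (i+1) < lam (i+1) := hOcc (i+1) (by omega) (by omega)
    have hci : ((i, mu i) : ℕ × ℕ) ∈ skewCells lam mu := mem_skew.mpr ⟨le_refl _, hi⟩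
    have hci1 : ((i+1, mu (i+1)) : ℕ × ℕ) ∈ skewCells lam mu := mem_skew.mpr ⟨le_refl _, hi1⟩
    have hpath := hconn _ hci _ hci1
    have hcross := cross_of_path hpath (le_refl i)
    rcases hcross with hcon | ⟨j, hj1, hj2⟩
    · simp only at hcon; omega
    · -- mu i < lam (i+1)
      rw [mem_skew] at hj1 hj2
      have hlt : mu i < lam (i+1) := by omega
      -- no square: lam (i+1) ≤ mu i + 1
      by_contra hc
      apply hsq
      have hmu1 : mu (i+1) ≤ mu i := hpmu.1 (by omega)
      have hll : lam (i+1) ≤ lam i := hplam.1 (by omega)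
      exact ⟨i, mu i, mem_skew.mpr ⟨le_refl _, by omega⟩, mem_skew.mpr ⟨hmu1, by omega⟩,
        mem_skew.mpr ⟨by omega, by omega⟩, mem_skew.mpr ⟨by omega, by omega⟩⟩
  -- beta values of mu
  have hbmu : ∀ i, a ≤ i → i < b → beta mu i = beta lam (i+1) := by
    intro i h1 h2
    have := hCons i h1 h2
    unfold beta
    push_cast [this]
    ring
  have hbout : ∀ i, i < a ∨ b < i → beta mu i = beta lam i := by
    intro i hi
    unfold beta
    rw [hOut i hi]
  -- size identity
  have hkeq : (k:ℤ) = beta lam a - beta mu b := by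
    have h1 : (skewCells lam mu).ncard = k := hcard
    rw [skew_ncard_eq hN] at h1
    have h2 : ((k:ℕ):ℤ) = ∑ i ∈ Finset.range N, ((lam i : ℤ) - (mu i : ℤ)) := by
      rw [← h1, sum_sub_cast hle]
    have h3 : ∑ i ∈ Finset.range N, ((lam i : ℤ) - (mu i : ℤ))
        = ∑ i ∈ Finset.Icc a b, ((lam i : ℤ) - (mu i : ℤ)) := by
      symm
      apply Finset.sum_subset
      · intro i hi
        rw [Finset.mem_Icc] at hi
        rw [Finset.mem_range]
        omega
      · intro i _ hi
        rw [Finset.mem_Icc] at hi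
        have : mu i = lam i := hOut i (by omega)
        rw [this]
        ring
    have h4 : ∑ i ∈ Finset.Icc a b, ((lam i : ℤ) - (mu i : ℤ))
        = ∑ i ∈ Finset.Icc a b, (beta lam i - beta mu i) := by
      apply Finset.sum_congr rfl
      intro i _
      unfold beta
      ring
    have h5 := telescope (beta lam) (beta mu) a b hab hbmu
    rw [h2, h3, h4, h5]
  have hbmub : beta mu b = beta lam a - k := by omega
  -- beta lam a - k not in bset lam
  have hblow : beta lam (b+1) < beta lam a - k := by
    have h1 := beta_succ_lt hpmu b
    have h2 := hbout (b+1) (Or.inr (by omega))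
    omega
  have hbhigh : beta lam a - k < beta lam b := by
    rcases eq_or_lt_of_le hab with heq | hlt
    · rw [← heq]
      omega
    · have h1 := hbmu (b-1) (by omega) (by omega)
      have h2 : b - 1 + 1 = b := by omega
      rw [h2] at h1
      have h3 := beta_succ_lt hpmu (b-1)
      rw [h2] at h3
      omega
  have hnot : beta lam a - k ∉ bset lam := by
    rintro ⟨j, hj⟩
    rcases le_or_gt j b with hjb | hjb
    · have := (beta_strictAnti hplam).antitone hjb
      omega
    · have := (beta_strictAnti hplam).antitone (by omega : b + 1 ≤ j)
      omega
  -- the set identity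
  have hinj := (beta_strictAnti hplam).injective
  have hset : bset mu = insert (beta lam a - k) (bset lam \ {beta lam a}) := by
    ext x
    constructor
    · rintro ⟨i, rfl⟩
      rcases lt_or_ge i a with h1 | h1
      · refine Or.inr ⟨⟨i, (hbout i (Or.inl h1)).symm⟩, ?_⟩
        rw [hbout i (Or.inl h1)]
        intro hc
        have := hinj hc
        omega
      · rcases lt_or_ge i b with h2 | h2
        · refine Or.inr ⟨⟨i+1, (hbmu i h1 h2).symm⟩, ?_⟩
          rw [hbmu i h1 h2]
          intro hc
          have := hinj hc
          omega
        · rcases eq_or_lt_of_le h2 with h3 | h3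
          · left
            exact h3 ▸ hbmub
          · refine Or.inr ⟨⟨i, (hbout i (Or.inr h3)).symm⟩, ?_⟩
            rw [hbout i (Or.inr h3)]
            intro hc
            have := hinj hc
            omega
    · rintro (rfl | ⟨⟨i, rfl⟩, hne⟩)
      · exact ⟨b, hbmub⟩
      · have hia : i ≠ a := by
          intro hc
          subst hc
          exact hne rfl
        rcases lt_or_ge i a with h1 | h1
        · exact ⟨i, hbout i (Or.inl h1)⟩
        · have h1' : a < i := by omega
          rcases le_or_gt i b with h2 | h2
          · refine ⟨i - 1, ?_⟩
            have := hbmu (i-1) (by omega) (by omega)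
            rw [this]
            congr 1
            omega
          · exact ⟨i, hbout i (Or.inr h2)⟩
  exact ⟨beta lam a, ⟨a, rfl⟩, hnot, hset⟩

end CoreWD
namespace CoreWD

lemma rimhook_of_move {k : ℕ} (hk : 1 ≤ k) {lam : ℕ → ℕ} (hplam : IsPartitionFun lam)
    {x : ℤ} (hx : x ∈ bset lam) (hxnot : x - (k:ℤ) ∉ bset lam) :
    ∃ mu : ℕ → ℕ, IsRimHook lam mu k := by
  classical
  obtain ⟨a, hxa⟩ := hx
  have hk' : (1:ℤ) ≤ (k:ℤ) := by exact_mod_cast hk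
  obtain ⟨N, hN⟩ := hplam.2
  -- find m : the last row with beta > x - k
  obtain ⟨m, hhigh, hlow, ham⟩ :
      ∃ m : ℕ, x - (k:ℤ) < beta lam m ∧ beta lam (m+1) < x - (k:ℤ) ∧ a ≤ m := by
    set P : ℕ → Prop := fun i => x - (k:ℤ) < beta lam i with hP
    have hPa : P a := by rw [hP]; simp only; omega
    set B : ℕ := (beta lam 0 - (x - k)).toNat with hB
    have hPB : ∀ i, B < i → ¬ P i := by
      intro i hi
      rw [hP]
      simp only [not_lt]
      have := beta_le_zero hplam i
      omega
    have haB : a ≤ B := by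
      by_contra hc
      exact hPB a (by omega) hPa
    set m := Nat.findGreatest P B with hm
    have hPm : P m := Nat.findGreatest_spec haB hPa
    have ham : a ≤ m := Nat.le_findGreatest haB hPa
    have hm1 : ¬ P (m+1) := by
      rcases le_or_gt (m+1) B with h | h
      · exact Nat.findGreatest_is_greatest (by omega) h
      · exact hPB _ (by omega)
    refine ⟨m, hPm, ?_, ham⟩
    rw [hP] at hm1
    simp only [not_lt] at hm1
    rcases lt_or_eq_of_le hm1 with h | h
    · exact h
    · exfalso; exact hxnot ⟨m+1, h⟩
  -- basic bounds
  have hblam : ∀ i, beta lam (i+1) < beta lam i := beta_succ_lt hplam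
  have hlamnn : ∀ i : ℕ, (0:ℤ) ≤ (lam i : ℤ) := fun i => by positivity
  have hbge : ∀ i : ℕ, -(i:ℤ) ≤ beta lam i := by
    intro i; unfold beta; have := hlamnn i; omega
  have hxkm : (0:ℤ) ≤ x - k + m := by
    have := hbge (m+1)
    omega
  have hgap : ∀ i j : ℕ, i ≤ j → beta lam j ≤ beta lam i - ((j - i : ℕ) : ℤ) :=
    fun i j h => beta_gap hplam h
  have hlam1 : ∀ i, a ≤ i → i < m → 1 ≤ lam (i+1) := by
    intro i h1 h2
    by_contra hc
    push_neg at hc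
    have h0 : lam (i+1) = 0 := by omega
    have hg := hgap (i+1) m (by omega)
    have hc2 : ((m - (i+1) : ℕ) : ℤ) = (m:ℤ) - (i:ℤ) - 1 := by omega
    rw [hc2] at hg
    have hb1 := hbge (m+1)
    have hh := hhigh
    have hl := hlow
    unfold beta at hg hb1 hh hl
    rw [h0] at hg
    omega
  -- define mu
  set mu : ℕ → ℕ := fun i =>
    if i < a then lam i else if i < m then lam (i+1) - 1
    else if i = m then (x - (k:ℤ) + m).toNat else lam i with hmu
  have hmuv : ∀ i, (mu i : ℤ) =
      if i < a then (lam i:ℤ) else if i < m then (lam (i+1):ℤ) - 1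
      else if i = m then x - (k:ℤ) + (m:ℤ) else (lam i:ℤ) := by
    intro i
    rw [hmu]
    simp only
    split_ifs with h1 h2 h3
    · rfl
    · have := hlam1 i (by omega) h2
      omega
    · omega
    · rfl
  -- beta values of mu
  have hbm : ∀ i, beta mu i =
      if i < a then beta lam i else if i < m then beta lam (i+1)
      else if i = m then x - (k:ℤ) else beta lam i := by
    intro i
    unfold beta
    rw [hmuv i]
    split_ifs <;> push_cast <;> omega
  -- strict decrease of beta mu
  have hstep : ∀ i, beta mu (i+1) < beta mu i := by
    intro i
    rcases lt_or_ge (i+1) a with h1 | h1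
    · have vi : beta mu i = beta lam i := by
        rw [hbm i, if_pos (by omega : i < a)]
      have vi1 : beta mu (i+1) = beta lam (i+1) := by
        rw [hbm (i+1), if_pos h1]
      have := hblam i
      omega
    · rcases eq_or_lt_of_le h1 with h2 | h2
      · -- i + 1 = a
        have vi : beta mu i = beta lam i := by
          rw [hbm i, if_pos (by omega : i < a)]
        rcases lt_or_ge a m with h3 | h3
        · have vi1 : beta mu (i+1) = beta lam (i+1+1) := by
            rw [hbm (i+1), if_neg (by omega), if_pos (by omega : i + 1 < m)]
          have := hblam i
          have := hblam (i+1)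
          omega
        · have ham' : a = m := by omega
          have vi1 : beta mu (i+1) = x - (k:ℤ) := by
            rw [hbm (i+1), if_neg (by omega), if_neg (by omega),
              if_pos (by omega : i + 1 = m)]
          have h4 := hblam i
          have h5 : beta lam (i+1) = x := by rw [show i + 1 = a by omega]; exact hxa
          have hh := hhigh
          rw [show m = i + 1 by omega] at hh
          omega
      · -- a ≤ i
        rcases lt_or_ge (i+1) m with h3 | h3
        · have vi : beta mu i = beta lam (i+1) := by
            rw [hbm i, if_neg (by omega), if_pos (by omega : i < m)]
          have vi1 : beta mu (i+1) = beta lam (i+1+1) := by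
            rw [hbm (i+1), if_neg (by omega), if_pos h3]
          have := hblam (i+1)
          omega
        · rcases eq_or_lt_of_le h3 with h4 | h4
          · -- m = i + 1
            have vi : beta mu i = beta lam (i+1) := by
              rw [hbm i, if_neg (by omega), if_pos (by omega : i < m)]
            have vi1 : beta mu (i+1) = x - (k:ℤ) := by
              rw [hbm (i+1), if_neg (by omega), if_neg (by omega), if_pos h4.symm]
            have hh := hhigh
            rw [h4] at hh
            omega
          · rcases eq_or_lt_of_le (by omega : m ≤ i) with h5 | h5
            · -- m = i
              have vi : beta mu i = x - (k:ℤ) := by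
                rw [hbm i, if_neg (by omega), if_neg (by omega), if_pos h5.symm]
              have vi1 : beta mu (i+1) = beta lam (i+1) := by
                rw [hbm (i+1), if_neg (by omega), if_neg (by omega), if_neg (by omega)]
              have hl := hlow
              rw [h5] at hl
              omega
            · have vi : beta mu i = beta lam i := by
                rw [hbm i, if_neg (by omega), if_neg (by omega), if_neg (by omega)]
              have vi1 : beta mu (i+1) = beta lam (i+1) := by
                rw [hbm (i+1), if_neg (by omega), if_neg (by omega), if_neg (by omega)]
              have := hblam i
              omega
  -- mu is a partition
  have hanti : Antitone mu := by
    apply antitone_nat_of_succ_le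
    intro i
    have := hstep i
    unfold beta at this
    omega
  have hpmu : IsPartitionFun mu := by
    refine ⟨hanti, max N (m+1), fun i hi => ?_⟩
    have h1 := hmuv i
    rw [if_neg (by omega), if_neg (by omega), if_neg (by omega)] at h1
    have h2 := hN i (by omega)
    omega
  -- mu ≤ lam
  have hle : ∀ i, mu i ≤ lam i := by
    intro i
    have h1 := hmuv i
    split_ifs at h1 with h2 h3 h4
    · omega
    · have := hplam.1 (by omega : i ≤ i + 1)
      omega
    · subst h4
      unfold beta at hhigh
      omega
    · omega
  -- occupied rows are exactly [a, m]
  have hocc : ∀ i, mu i < lam i ↔ a ≤ i ∧ i ≤ m := by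
    intro i
    have h1 := hmuv i
    split_ifs at h1 with h2 h3 h4
    · constructor
      · intro h; omega
      · intro h; omega
    · have := hplam.1 (by omega : i ≤ i + 1)
      have := hlam1 i (by omega) h3
      constructor
      · intro h; omega
      · intro h; omega
    · subst h4
      unfold beta at hhigh
      constructor
      · intro h; omega
      · intro h; omega
    · constructor
      · intro h; omega
      · intro h; omega
  -- mu beta values on the hook
  have hbmu_mid : ∀ i, a ≤ i → i < m → beta mu i = beta lam (i+1) := by
    intro i h1 h2
    rw [hbm i, if_neg (by omega), if_pos h2]
  have hbmu_m : beta mu m = x - (k:ℤ) := by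
    rw [hbm m, if_neg (by omega), if_neg (by omega), if_pos rfl]
  have hbmu_out : ∀ i, i < a ∨ m < i → mu i = lam i := by
    intro i hi
    have h1 := hmuv i
    rcases hi with h | h
    · rw [if_pos h] at h1; omega
    · rw [if_neg (by omega), if_neg (by omega), if_neg (by omega)] at h1; omega
  -- cardinality
  have hNbig : ∀ i, i ≥ max N (m+1) → lam i = 0 := fun i hi => hN i (by omega)
  have hncard : (skewCells lam mu).ncard = k := by
    rw [skew_ncard_eq hNbig]
    have hcast : ((∑ i ∈ Finset.range (max N (m+1)), (lam i - mu i) : ℕ) : ℤ)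
        = ∑ i ∈ Finset.range (max N (m+1)), ((lam i : ℤ) - (mu i : ℤ)) :=
      sum_sub_cast hle _
    have h3 : ∑ i ∈ Finset.range (max N (m+1)), ((lam i : ℤ) - (mu i : ℤ))
        = ∑ i ∈ Finset.Icc a m, ((lam i : ℤ) - (mu i : ℤ)) := by
      symm
      apply Finset.sum_subset
      · intro i hi
        rw [Finset.mem_Icc] at hi
        rw [Finset.mem_range]
        omega
      · intro i _ hi
        rw [Finset.mem_Icc] at hi
        rw [hbmu_out i (by omega)]
        ring
    have h4 : ∑ i ∈ Finset.Icc a m, ((lam i : ℤ) - (mu i : ℤ))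
        = ∑ i ∈ Finset.Icc a m, (beta lam i - beta mu i) := by
      apply Finset.sum_congr rfl
      intro i _
      unfold beta
      ring
    have h5 := telescope (beta lam) (beta mu) a m ham hbmu_mid
    have : ((∑ i ∈ Finset.range (max N (m+1)), (lam i - mu i) : ℕ) : ℤ) = (k:ℤ) := by
      rw [hcast, h3, h4, h5, hbmu_m, hxa]
      ring
    exact_mod_cast this
  -- no square
  have hsq : NoSquare (skewCells lam mu) := by
    rintro ⟨i, j, h1, h2, h3, h4⟩
    rw [mem_skew] at h1 h2 h3 h4
    have hocci : a ≤ i ∧ i ≤ m := (hocc i).mp (by omega)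
    have hocci1 : a ≤ i+1 ∧ i+1 ≤ m := (hocc (i+1)).mp (by omega)
    have hv := hmuv i
    rw [if_neg (by omega), if_pos (by omega : i < m)] at hv
    omega
  -- connectivity
  have hconn : CellConnected (skewCells lam mu) := by
    have hrow : ∀ i : ℕ, ∀ j, mu i ≤ j → j < lam i → (i, j) ∈ skewCells lam mu :=
      fun i j h1 h2 => mem_skew.mpr ⟨h1, h2⟩
    have hreach : ∀ i, a ≤ i → i ≤ m → ∀ j, mu i ≤ j → j < lam i →
        Relation.ReflTransGen (RR (skewCells lam mu)) (i, j) (a, mu a) := by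
      intro i hi
      induction i, hi using Nat.le_induction with
      | base =>
        intro _ j hj1 hj2
        have hoa : mu a < lam a := (hocc a).mpr ⟨le_refl _, ham⟩
        exact row_path (hrow a) j (mu a) hj1 (le_refl _) hj2 hoa
      | succ i hi ih =>
        intro him j hj1 hj2
        have hi1m : i + 1 ≤ m := him
        have hoi : mu i < lam i := (hocc i).mpr ⟨hi, by omega⟩
        have hoi1 : mu (i+1) < lam (i+1) := (hocc (i+1)).mpr ⟨by omega, him⟩
        have hv := hmuv i
        rw [if_neg (by omega), if_pos (by omega : i < m)] at hv
        -- mu i = lam (i+1) - 1 in ℤ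
        have hbr : mu i = lam (i+1) - 1 ∧ 1 ≤ lam (i+1) := by omega
        have p1 : Relation.ReflTransGen (RR (skewCells lam mu)) (i+1, j) (i+1, lam (i+1) - 1) :=
          row_path (hrow (i+1)) j (lam (i+1) - 1) hj1 (by omega) hj2 (by omega)
        have p2 : RR (skewCells lam mu) (i+1, lam (i+1) - 1) (i, mu i) := by
          refine ⟨hrow (i+1) _ (by omega) (by omega), hrow i _ (le_refl _) hoi, ?_⟩
        -- adjacency
          right
          constructor
          · simp only
            omega
          · right
            simp only
        have p3 := ih (by omega) (mu i) (le_refl _) hoi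
        exact Relation.ReflTransGen.trans (Relation.ReflTransGen.tail p1 p2) p3
    intro c hc d hd
    obtain ⟨c1, c2⟩ := c
    obtain ⟨d1, d2⟩ := d
    rw [mem_skew] at hc hd
    have hc' : a ≤ c1 ∧ c1 ≤ m := (hocc c1).mp (by omega)
    have hd' : a ≤ d1 ∧ d1 ≤ m := (hocc d1).mp (by omega)
    exact Relation.ReflTransGen.trans
      (hreach c1 hc'.1 hc'.2 c2 hc.1 hc.2)
      (path_symm (hreach d1 hd'.1 hd'.2 d2 hd.1 hd.2))
  exact ⟨mu, hplam, hpmu, hle, hncard, hconn, hsq⟩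

end CoreWD
namespace CoreWD

lemma reach_eqcnt {k : ℕ} (hk : 1 ≤ k) {lam gamma : ℕ → ℕ} (hplam : IsPartitionFun lam)
    (h : Relation.ReflTransGen (fun a b => IsRimHook a b k) lam gamma) :
    IsPartitionFun gamma ∧ EqCnt k (bset lam) (bset gamma) := by
  induction h with
  | refl => exact ⟨hplam, eqcnt_refl k _⟩
  | @tail nu gamma' p step ih =>
    obtain ⟨hpnu, heq⟩ := ih
    have hmove := move_of_rimhook hk step
    have hpg : IsPartitionFun gamma' := step.2.1
    refine ⟨hpg, eqcnt_trans heq ?_⟩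
    exact eqcnt_of_move hk (fun t => bset_finite_above hpnu t) hmove

lemma terminal_of_no_hook {k : ℕ} (hk : 1 ≤ k) {gamma : ℕ → ℕ}
    (hpg : IsPartitionFun gamma) (h : ¬ ∃ mu : ℕ → ℕ, IsRimHook gamma mu k) :
    Terminal k (bset gamma) := by
  intro x hx
  by_contra hc
  exact h (rimhook_of_move hk hpg hx hc)

end CoreWD


end

/-- The `k`-core of a partition is well-defined: any two maximal sequences of removals
of `k`-rim hooks from `λ` terminate at the same partition. -/
theorem core_well_defined (k : ℕ) (hk : 1 ≤ k) (lam gamma gamma' : ℕ → ℕ)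
    (hlam : IsPartitionFun lam)
    (h : IsCoreOf k lam gamma) (h' : IsCoreOf k lam gamma') : gamma = gamma' := by
  obtain ⟨hreach, hterm⟩ := h
  obtain ⟨hreach', hterm'⟩ := h'
  obtain ⟨hpg, heq⟩ := CoreWD.reach_eqcnt hk hlam hreach
  obtain ⟨hpg', heq'⟩ := CoreWD.reach_eqcnt hk hlam hreach'
  have hT : CoreWD.Terminal k (CoreWD.bset gamma) := CoreWD.terminal_of_no_hook hk hpg hterm
  have hT' : CoreWD.Terminal k (CoreWD.bset gamma') := CoreWD.terminal_of_no_hook hk hpg' hterm'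
  have heq2 : CoreWD.EqCnt k (CoreWD.bset gamma) (CoreWD.bset gamma') :=
    CoreWD.eqcnt_trans (CoreWD.eqcnt_symm heq) heq'
  have hsub1 := CoreWD.terminal_subset hk hT hT'
    (fun t => CoreWD.bset_finite_above hpg t)
    (fun t => CoreWD.bset_finite_above hpg' t)
    (CoreWD.bset_cofinite_below hpg') heq2
  have hsub2 := CoreWD.terminal_subset hk hT' hT
    (fun t => CoreWD.bset_finite_above hpg' t)
    (fun t => CoreWD.bset_finite_above hpg t)
    (CoreWD.bset_cofinite_below hpg) (CoreWD.eqcnt_symm heq2)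
  exact CoreWD.bset_inj hpg hpg' (le_antisymm hsub1 hsub2)
end

section
/- For a partition λ with empty k-core, the sign σ_λ := (-1)^{ht(t)} is independent of the chosen sequence t of k-rim hook removals reducing λ to the empty partition, where ht(t) is the sum of the heights of the removed rim hooks. -/
open scoped Classical

/-- `Reduces k lam ε`: the partition `lam` can be reduced to the empty partition by
successive removals of `k`-rim hooks, with total sign `ε = (-1)^{sum of heights}`. -/
inductive Reduces (k : ℕ) : (ℕ → ℕ) → ℤ → Prop
  | nil : Reduces k (fun _ => 0) 1
  | cons {lam mu : ℕ → ℕ} {ε : ℤ} (h : IsRimHook lam mu k) (hr : Reduces k mu ε) :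
      Reduces k lam ((-1) ^ heightOf lam mu * ε)

-- ======== auxiliary development ========
namespace SignWD

open Finset

/-- Inversion count of a bead configuration w.r.t. residues mod `k`. -/
noncomputable def inv (k : ℕ) (B : Finset ℕ) : ℕ :=
  ((B ×ˢ B).filter (fun p => p.1 < p.2 ∧ p.2 % k < p.1 % k)).card

noncomputable def sgn (k : ℕ) (B : Finset ℕ) : ℤ := (-1) ^ inv k B

noncomputable def beta (N : ℕ) (lam : ℕ → ℕ) : Finset ℕ :=
  (Finset.range N).image (fun i => lam i + (N - i))

lemma neg_one_pow_mod (a : ℕ) : ((-1 : ℤ)) ^ a = (-1) ^ (a % 2) := by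
  conv_lhs => rw [← Nat.div_add_mod a 2]
  rw [pow_add, pow_mul]
  norm_num

lemma neg_one_pow_congr {a b : ℕ} (h : (a : ZMod 2) = (b : ZMod 2)) :
    ((-1 : ℤ)) ^ a = (-1) ^ b := by
  rw [ZMod.natCast_eq_natCast_iff'] at h
  rw [neg_one_pow_mod a, neg_one_pow_mod b, h]

lemma sgn_sq (k : ℕ) (B : Finset ℕ) : sgn k B * sgn k B = 1 := by
  unfold sgn
  rw [← pow_add, ← two_mul]
  exact (neg_one_pow_mod _).trans (by simp)

/-- Parity of inversion count changes by the number of crossed beads under a bead move. -/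
lemma bead_move_parity (k : ℕ) (B : Finset ℕ) (b c : ℕ) (hbc : c + k = b)
    (hb : b ∈ B) (hc : c ∉ B) :
    (inv k (insert c (B.erase b)) : ZMod 2)
      = (inv k B : ZMod 2) + ((B.filter (fun y => c < y ∧ y < b)).card : ZMod 2) := by
  have hk0 : k ≠ 0 := by rintro rfl; simp at hbc; exact hc (hbc ▸ hb)
  have hcb : c < b := by omega
  set C := B.erase b with hC
  have hbC : b ∉ C := Finset.notMem_erase _ _
  have hcC : c ∉ C := fun h => hc (Finset.mem_of_mem_erase h)
  have hBins : B = insert b C := by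
    rw [hC, Finset.insert_erase hb]
  -- express inv as double sum in ZMod 2
  set F : ℕ → ℕ → ZMod 2 := fun x y => if x < y ∧ y % k < x % k then 1 else 0 with hF
  have hinv : ∀ (D : Finset ℕ), (inv k D : ZMod 2) = ∑ x ∈ D, ∑ y ∈ D, F x y := by
    intro D
    unfold inv
    rw [Finset.card_filter]
    push_cast
    rw [Finset.sum_product]
  have hres : b % k = c % k := by
    rw [← hbc]; simp
  have key : ∀ y ∈ C, F c y + F y c + F b y + F y b
      = (if c < y ∧ y < b then 1 else 0) := by
    intro y hy
    have hyb : y ≠ b := Finset.ne_of_mem_erase hy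
    have hyc : y ≠ c := fun h => hc (h ▸ Finset.mem_of_mem_erase hy)
    have h2 : ∀ z : ZMod 2, z + z = 0 := by decide
    rcases lt_trichotomy y c with h1 | h1 | h1
    · have e1 : F c y = 0 := if_neg (by omega)
      have e2 : F b y = 0 := if_neg (by omega)
      have e3 : F y c = F y b := by
        simp only [hF, hres]
        have t1 : y < c := h1
        have t2 : y < b := by omega
        simp [t1, t2]
      rw [e1, e2, e3, if_neg (show ¬ (c < y ∧ y < b) by omega)]
      rw [zero_add, add_zero]
      exact h2 _
    · exact absurd h1 hyc
    · rcases lt_trichotomy y b with h2' | h2' | h2'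
      · -- c < y < b : exactly one of F c y, F y b is 1
        have hneq : y % k ≠ c % k := by
          intro he
          have : k ∣ y - c := (Nat.modEq_iff_dvd' (le_of_lt h1)).mp he.symm
          have := Nat.le_of_dvd (by omega) this
          omega
        have e1 : F y c = 0 := if_neg (by omega)
        have e2 : F b y = 0 := if_neg (by omega)
        rw [e1, e2, if_pos ⟨h1, h2'⟩, add_zero, add_zero]
        simp only [hF, hres]
        rcases lt_or_gt_of_ne hneq with hm | hm
        · rw [if_pos ⟨h1, hm⟩, if_neg (by push_neg; intro _; omega), add_zero]
        · rw [if_neg (by push_neg; intro _; omega), if_pos ⟨h2', hm⟩, zero_add]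
      · exact absurd h2' hyb
      · have e1 : F y c = 0 := if_neg (by omega)
        have e2 : F y b = 0 := if_neg (by omega)
        have e3 : F c y = F b y := by
          simp only [hF, hres]
          have t1 : c < y := h1
          have t2 : b < y := h2'
          simp [t1, t2]
        rw [e1, e2, e3, if_neg (show ¬ (c < y ∧ y < b) by omega)]
        rw [add_zero, add_zero]
        exact h2 _
  have expand : ∀ a : ℕ, a ∉ C → ∑ x ∈ insert a C, ∑ y ∈ insert a C, F x y
      = (∑ x ∈ C, ∑ y ∈ C, F x y) + (∑ y ∈ C, (F a y + F y a)) + F a a := by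
    intro a ha
    rw [Finset.sum_insert ha]
    rw [Finset.sum_insert ha]
    have : ∑ x ∈ C, ∑ y ∈ insert a C, F x y
        = ∑ x ∈ C, (F x a + ∑ y ∈ C, F x y) := by
      apply Finset.sum_congr rfl
      intro x _
      rw [Finset.sum_insert ha]
    rw [this, Finset.sum_add_distrib, Finset.sum_add_distrib]
    ring
  have hFaa : ∀ a, F a a = 0 := by intro a; simp [hF]
  rw [hinv, hinv, hBins, expand c hcC, expand b hbC, hFaa, hFaa]
  have h2 : (2 : ZMod 2) = 0 := by decide
  have step : ∑ y ∈ C, (F c y + F y c) = (∑ y ∈ C, (F b y + F y b)) + ∑ y ∈ C, (if c < y ∧ y < b then (1:ZMod 2) else 0) := by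
    rw [← Finset.sum_add_distrib]
    apply Finset.sum_congr rfl
    intro y hy
    have hkey := key y hy
    linear_combination hkey - (F b y + F y b) * h2
  rw [step]
  have hfilt : ∑ y ∈ C, (if c < y ∧ y < b then (1:ZMod 2) else 0)
      = ((B.filter (fun y => c < y ∧ y < b)).card : ZMod 2) := by
    rw [Finset.card_filter, hBins, Finset.sum_insert hbC]
    push_cast
    simp [lt_irrefl]
  rw [hfilt]
  rw [hBins]
  ring

section Paths

variable {S : Set (ℕ × ℕ)}

lemma path_rows {c d : ℕ × ℕ}
    (hp : Relation.ReflTransGen (fun x y => x ∈ S ∧ y ∈ S ∧ AdjCell x y) c d) (hc : c ∈ S) :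
    ∀ i, c.1 ≤ i → i ≤ d.1 → ∃ e ∈ S, e.1 = i := by
  induction hp with
  | refl =>
    intro i h1 h2
    exact ⟨c, hc, by omega⟩
  | tail _ hstep ih =>
    rename_i b d _
    intro i h1 h2
    by_cases hib : i ≤ b.1
    · exact ih i h1 hib
    · obtain ⟨hbS, hdS, hadj⟩ := hstep
      have : d.1 = b.1 + 1 ∧ i = d.1 := by
        rcases hadj with ⟨h, _⟩ | ⟨_, h | h⟩ <;> omega
      exact ⟨d, hdS, this.2.symm⟩

lemma path_cross {c d : ℕ × ℕ}
    (hp : Relation.ReflTransGen (fun x y => x ∈ S ∧ y ∈ S ∧ AdjCell x y) c d) :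
    ∀ i, c.1 ≤ i → i + 1 ≤ d.1 → ∃ j, (i, j) ∈ S ∧ (i + 1, j) ∈ S := by
  induction hp with
  | refl => intro i h1 h2; omega
  | tail _ hstep ih =>
    rename_i b d _
    intro i h1 h2
    by_cases hib : i + 1 ≤ b.1
    · exact ih i h1 hib
    · obtain ⟨hbS, hdS, hadj⟩ := hstep
      have hv : b.2 = d.2 ∧ b.1 = i ∧ d.1 = i + 1 := by
        rcases hadj with ⟨h, _⟩ | ⟨h, h' | h'⟩ <;> (constructor <;> omega)
      refine ⟨b.2, ?_, ?_⟩
      · have he : (i, b.2) = b := Prod.ext hv.2.1.symm rfl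
        rw [he]; exact hbS
      · have he : (i + 1, b.2) = d := Prod.ext hv.2.2.symm hv.1
        rw [he]; exact hdS

end Paths

lemma tele (f : ℕ → ℤ) (a : ℕ) : ∀ b, a ≤ b → ∑ i ∈ Finset.Ico a b, (f i - f (i+1)) = f a - f b := by
  intro b hb
  induction b, hb using Nat.le_induction with
  | base => simp
  | succ n hn ih =>
    rw [Finset.sum_Ico_succ_top (by omega), ih]
    ring

lemma rimhook_beta {k N : ℕ} {lam mu : ℕ → ℕ} (hk : 1 ≤ k) (h : IsRimHook lam mu k)
    (hN : ∀ i, N ≤ i → lam i = 0) :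
    ∃ b c : ℕ, c + k = b ∧ b ∈ beta N lam ∧ c ∉ beta N lam ∧
      beta N mu = insert c ((beta N lam).erase b) ∧
      ((beta N lam).filter (fun y => c < y ∧ y < b)).card = heightOf lam mu := by
  obtain ⟨⟨hlA, -⟩, ⟨hmA, -⟩, hle, hcard, hconn, hsq⟩ := h
  set S := skewCells lam mu with hS
  have hmem : ∀ i j : ℕ, ((i,j) ∈ S) ↔ (mu i ≤ j ∧ j < lam i) := fun i j => Iff.rfl
  have hmem' : ∀ c : ℕ × ℕ, c ∈ S → mu c.1 ≤ c.2 ∧ c.2 < lam c.1 := fun c hc => hc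
  have hrowN : ∀ i, mu i < lam i → i < N := by
    intro i hi
    by_contra hni
    have := hN i (by omega)
    omega
  -- S is finite and nonempty
  have hSsub : S ⊆ Set.Iio N ×ˢ Set.Iio (lam 0) := by
    intro c hc
    obtain ⟨h1, h2⟩ := hmem' c hc
    exact ⟨hrowN c.1 (by omega), lt_of_lt_of_le h2 (hlA (Nat.zero_le c.1))⟩
  have hSfin : S.Finite :=
    Set.Finite.subset (Set.Finite.prod (Set.finite_Iio _) (Set.finite_Iio _)) hSsub
  have hSne : S.Nonempty := by
    rw [← Set.ncard_pos hSfin, hcard]; omega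
  -- the set of occupied rows, as a finset
  have hRfin : {i | mu i < lam i}.Finite :=
    Set.Finite.subset (Set.finite_Iio N) (fun i hi => hrowN i hi)
  set Rf : Finset ℕ := hRfin.toFinset with hRf
  have hRfmem : ∀ i, i ∈ Rf ↔ mu i < lam i := by
    intro i; rw [hRf, Set.Finite.mem_toFinset]; rfl
  have hRfne : Rf.Nonempty := by
    obtain ⟨c, hc⟩ := hSne
    obtain ⟨h1, h2⟩ := hmem' c hc
    exact ⟨c.1, (hRfmem c.1).mpr (by omega)⟩
  set r1 : ℕ := Rf.min' hRfne with hr1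
  set r2 : ℕ := Rf.max' hRfne with hr2
  have hr1R : mu r1 < lam r1 := (hRfmem r1).mp (Rf.min'_mem hRfne)
  have hr2R : mu r2 < lam r2 := (hRfmem r2).mp (Rf.max'_mem hRfne)
  have hbnd : ∀ i, mu i < lam i → r1 ≤ i ∧ i ≤ r2 :=
    fun i hi => ⟨Rf.min'_le i ((hRfmem i).mpr hi), Rf.le_max' i ((hRfmem i).mpr hi)⟩
  have hr12 : r1 ≤ r2 := (hbnd r1 hr1R).2
  have hr2N : r2 < N := hrowN r2 hr2R
  -- the occupied rows form an interval
  have hint : ∀ i, r1 ≤ i → i ≤ r2 → mu i < lam i := by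
    intro i hi1 hi2
    have hc1 : ((r1, mu r1) : ℕ × ℕ) ∈ S := (hmem r1 (mu r1)).mpr ⟨le_refl _, hr1R⟩
    have hc2 : ((r2, mu r2) : ℕ × ℕ) ∈ S := (hmem r2 (mu r2)).mpr ⟨le_refl _, hr2R⟩
    obtain ⟨e, heS, hei⟩ := SignWD.path_rows (hconn _ hc1 _ hc2) hc1 i hi1 hi2
    obtain ⟨h1, h2⟩ := hmem' e heS
    rw [hei] at h1 h2
    omega
  -- the strip condition
  have hstrip : ∀ i, r1 ≤ i → i < r2 → mu i + 1 = lam (i+1) := by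
    intro i hi1 hi2
    have hc1 : ((i, mu i) : ℕ × ℕ) ∈ S := (hmem i (mu i)).mpr ⟨le_refl _, hint i hi1 (by omega)⟩
    have hc2 : ((r2, mu r2) : ℕ × ℕ) ∈ S := (hmem r2 (mu r2)).mpr ⟨le_refl _, hr2R⟩
    obtain ⟨j, hj1, hj2⟩ := SignWD.path_cross (hconn _ hc1 _ hc2) i (le_refl _) (by omega)
    obtain ⟨a1, a2⟩ := (hmem i j).mp hj1
    obtain ⟨b1, b2⟩ := (hmem (i+1) j).mp hj2
    have hlt : mu i < lam (i+1) := by omega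
    by_contra hne
    have h2le : mu i + 2 ≤ lam (i+1) := by omega
    have hli : lam (i+1) ≤ lam i := hlA (by omega)
    have hmi : mu (i+1) ≤ mu i := hmA (by omega)
    exact hsq ⟨i, mu i, (hmem i (mu i)).mpr ⟨le_refl _, hint i hi1 (by omega)⟩,
      (hmem (i+1) (mu i)).mpr ⟨hmi, by omega⟩,
      (hmem i (mu i + 1)).mpr ⟨by omega, by omega⟩,
      (hmem (i+1) (mu i + 1)).mpr ⟨by omega, by omega⟩⟩
  have houter : ∀ i, (i < r1 ∨ r2 < i) → mu i = lam i := by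
    intro i hi
    have := hle i
    rcases Nat.lt_or_ge (mu i) (lam i) with hlt | hge
    · have := hbnd i hlt; omega
    · omega
  -- the height
  have hheight : heightOf lam mu = r2 - r1 := by
    have hset : {i | mu i < lam i} = Set.Icc r1 r2 := by
      ext i
      constructor
      · intro hi; exact hbnd i hi
      · rintro ⟨h1, h2⟩; exact hint i h1 h2
    rw [heightOf, hset, ← Finset.coe_Icc, Set.ncard_coe_finset, Nat.card_Icc]
    omega
  -- the size identity
  have hksum : k = ∑ i ∈ Finset.Icc r1 r2, (lam i - mu i) := by
    have hSF : S = ↑((Finset.Icc r1 r2).biUnion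
        (fun i => {i} ×ˢ Finset.Ico (mu i) (lam i))) := by
      ext c
      obtain ⟨i, j⟩ := c
      simp only [Finset.coe_biUnion, Set.mem_iUnion, Finset.mem_coe, Finset.mem_Icc,
        Finset.mem_product, Finset.mem_singleton, Finset.mem_Ico]
      rw [hmem i j]
      constructor
      · rintro ⟨h1, h2⟩
        exact ⟨i, hbnd i (by omega), rfl, h1, h2⟩
      · rintro ⟨a, -, rfl, h1, h2⟩
        exact ⟨h1, h2⟩
    have hdisj : ∀ x ∈ Finset.Icc r1 r2, ∀ y ∈ Finset.Icc r1 r2, x ≠ y →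
        Disjoint ({x} ×ˢ Finset.Ico (mu x) (lam x)) ({y} ×ˢ Finset.Ico (mu y) (lam y)) := by
      intro x _ y _ hxy
      rw [Finset.disjoint_left]
      rintro ⟨a, b⟩ ha hb
      simp only [Finset.mem_product, Finset.mem_singleton] at ha hb
      exact hxy (ha.1 ▸ hb.1 ▸ rfl)
    rw [← hcard, hSF, Set.ncard_coe_finset, Finset.card_biUnion hdisj]
    apply Finset.sum_congr rfl
    intro i _
    rw [Finset.card_product, Finset.card_singleton, Nat.card_Ico, one_mul]
  have hmu2 : (mu r2 : ℤ) + k = (lam r1 : ℤ) + r2 - r1 := by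
    have hz : (k : ℤ) = ∑ i ∈ Finset.Icc r1 r2, ((lam i : ℤ) - mu i) := by
      rw [hksum]
      push_cast [Nat.cast_sum]
      apply Finset.sum_congr rfl
      intro i _
      rw [Nat.cast_sub (hle i)]
    rw [← Finset.Ico_add_one_right_eq_Icc, Finset.sum_Ico_succ_top (by omega)] at hz
    have hmid : ∑ i ∈ Finset.Ico r1 r2, ((lam i : ℤ) - mu i)
        = ∑ i ∈ Finset.Ico r1 r2, (((lam i : ℤ) - lam (i+1)) + 1) := by
      apply Finset.sum_congr rfl
      intro i hi
      rw [Finset.mem_Ico] at hi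
      have := hstrip i hi.1 hi.2
      have : (mu i : ℤ) + 1 = lam (i+1) := by exact_mod_cast congrArg (Nat.cast : ℕ → ℤ) this
      linarith [this]
    rw [hmid, Finset.sum_add_distrib, Finset.sum_const, tele (fun i => (lam i : ℤ)) r1 r2 hr12,
      Nat.card_Ico] at hz
    simp only [nsmul_eq_mul, mul_one] at hz
    have hcst : ((r2 - r1 : ℕ) : ℤ) = (r2 : ℤ) - r1 := by omega
    rw [hcst] at hz
    linarith
  -- beta set analysis
  have hbetamem : ∀ (nu : ℕ → ℕ) (a : ℕ), a ∈ beta N nu ↔ ∃ i, i < N ∧ nu i + (N - i) = a := by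
    intro nu a
    rw [beta, Finset.mem_image]
    constructor
    · rintro ⟨i, hi, hfi⟩
      exact ⟨i, Finset.mem_range.mp hi, hfi⟩
    · rintro ⟨i, hi, hfi⟩
      exact ⟨i, Finset.mem_range.mpr hi, hfi⟩
  have hfanti : ∀ i j, i < j → j < N → lam j + (N - j) < lam i + (N - i) := by
    intro i j hij hjN
    have := hlA (le_of_lt hij)
    omega
  have hbc : (mu r2 + (N - r2)) + k = lam r1 + (N - r1) := by omega
  have hbB : lam r1 + (N - r1) ∈ beta N lam := (hbetamem lam _).mpr ⟨r1, by omega, rfl⟩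
  have houtlt : ∀ i, r2 < i → i < N → lam i + (N - i) < mu r2 + (N - r2) := by
    intro i hi hiN
    have h1 : mu i = lam i := houter i (Or.inr hi)
    have h2 : mu i ≤ mu r2 := hmA (by omega)
    omega
  have hgec : ∀ i, i ≤ r2 → mu r2 + (N - r2) < lam i + (N - i) := by
    intro i hi
    have h1 : mu r2 + (N - r2) < lam r2 + (N - r2) := by omega
    rcases Nat.lt_or_ge i r2 with h | h
    · exact lt_trans h1 (hfanti i r2 h hr2N)
    · have he : i = r2 := by omega
      rw [he]; exact h1
  have hcnot : mu r2 + (N - r2) ∉ beta N lam := by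
    rw [hbetamem]
    rintro ⟨i, hi, hfi⟩
    rcases Nat.lt_or_ge r2 i with h | h
    · have := houtlt i h hi
      omega
    · have := hgec i h
      omega
  have hgmid : ∀ i, r1 ≤ i → i < r2 → mu i + (N - i) = lam (i+1) + (N - (i+1)) := by
    intro i h1 h2
    have := hstrip i h1 h2
    omega
  have hgout : ∀ i, (i < r1 ∨ r2 < i) → mu i + (N - i) = lam i + (N - i) := by
    intro i hi
    have := houter i hi
    omega
  have hBeq : beta N mu = insert (mu r2 + (N - r2)) ((beta N lam).erase (lam r1 + (N - r1))) := by
    ext a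
    rw [Finset.mem_insert, Finset.mem_erase, hbetamem, hbetamem]
    constructor
    · rintro ⟨i, hi, rfl⟩
      rcases Nat.lt_or_ge i r1 with h1 | h1
      · refine Or.inr ⟨?_, i, hi, (hgout i (Or.inl h1)).symm⟩
        rw [hgout i (Or.inl h1)]
        have := hfanti i r1 h1 (by omega)
        omega
      · rcases Nat.lt_or_ge i r2 with h2 | h2
        · refine Or.inr ⟨?_, i + 1, by omega, (hgmid i h1 h2).symm⟩
          rw [hgmid i h1 h2]
          have := hfanti r1 (i + 1) (by omega) (by omega)
          omega
        · rcases Nat.lt_or_ge r2 i with h3 | h3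
          · refine Or.inr ⟨?_, i, hi, (hgout i (Or.inr h3)).symm⟩
            rw [hgout i (Or.inr h3)]
            have := hfanti r1 i (by omega) hi
            omega
          · have he : i = r2 := by omega
            rw [he]
            exact Or.inl rfl
    · rintro (rfl | ⟨hne, i, hi, rfl⟩)
      · exact ⟨r2, hr2N, rfl⟩
      · have hir1 : i ≠ r1 := by
          rintro rfl
          exact hne rfl
        rcases Nat.lt_or_ge i r1 with h1 | h1
        · exact ⟨i, hi, hgout i (Or.inl h1)⟩
        · rcases Nat.lt_or_ge r2 i with h3 | h3
          · exact ⟨i, hi, hgout i (Or.inr h3)⟩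
          · have h4 : r1 < i := by omega
            refine ⟨i - 1, by omega, ?_⟩
            have hm := hgmid (i - 1) (by omega) (by omega)
            rw [show i - 1 + 1 = i by omega] at hm
            exact hm
  have hfilt : ((beta N lam).filter
      (fun y => mu r2 + (N - r2) < y ∧ y < lam r1 + (N - r1))).card = r2 - r1 := by
    have himg : (beta N lam).filter (fun y => mu r2 + (N - r2) < y ∧ y < lam r1 + (N - r1))
        = (Finset.Ico (r1 + 1) (r2 + 1)).image (fun i => lam i + (N - i)) := by
      ext a
      rw [Finset.mem_filter, Finset.mem_image, hbetamem]
      constructor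
      · rintro ⟨⟨i, hi, rfl⟩, hca, hab⟩
        refine ⟨i, Finset.mem_Ico.mpr ⟨?_, ?_⟩, rfl⟩
        · by_contra hle'
          rcases Nat.lt_or_ge i r1 with hh | hh
          · have := hfanti i r1 hh (by omega)
            omega
          · have he : i = r1 := by omega
            rw [he] at hab
            omega
        · by_contra hle'
          have := houtlt i (by omega) hi
          omega
      · rintro ⟨i, hi', rfl⟩
        obtain ⟨h1, h2⟩ := Finset.mem_Ico.mp hi'
        have hiN : i < N := by omega
        exact ⟨⟨i, hiN, rfl⟩, hgec i (by omega), hfanti r1 i (by omega) hiN⟩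
    rw [himg, Finset.card_image_of_injOn, Nat.card_Ico]
    · omega
    · intro x hx y hy hxy
      rw [Finset.mem_coe, Finset.mem_Ico] at hx hy
      have hxy' : lam x + (N - x) = lam y + (N - y) := hxy
      by_contra hne
      rcases Nat.lt_or_ge x y with h | h
      · have := hfanti x y h (by omega)
        omega
      · have := hfanti y x (by omega) (by omega)
        omega
  exact ⟨lam r1 + (N - r1), mu r2 + (N - r2), hbc, hbB, hcnot, hBeq, by rw [hfilt, hheight]⟩

lemma sgn_rimhook {k N : ℕ} {lam mu : ℕ → ℕ} (hk : 1 ≤ k) (h : IsRimHook lam mu k)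
    (hN : ∀ i, N ≤ i → lam i = 0) :
    sgn k (beta N lam) = (-1) ^ heightOf lam mu * sgn k (beta N mu) := by
  obtain ⟨b, c, hbc, hb, hc, hbeq, hcardf⟩ := rimhook_beta hk h hN
  have hpar := bead_move_parity k (beta N lam) b c hbc hb hc
  rw [← hbeq, hcardf] at hpar
  have hpar2 : ((inv k (beta N mu) : ZMod 2))
      = ((inv k (beta N lam) + heightOf lam mu : ℕ) : ZMod 2) := by
    push_cast
    rw [hpar]
  have hpow := neg_one_pow_congr hpar2
  unfold sgn
  have h1 : ((-1:ℤ)) ^ heightOf lam mu * (-1) ^ heightOf lam mu = 1 := by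
    rw [← pow_add, ← two_mul, pow_mul]
    norm_num
  rw [hpow, pow_add, mul_comm ((-1:ℤ) ^ inv k (beta N lam)) ((-1:ℤ) ^ heightOf lam mu),
    ← mul_assoc, h1, one_mul]

lemma reduces_sgn {k : ℕ} (hk : 1 ≤ k) {lam : ℕ → ℕ} {ε : ℤ} (h : Reduces k lam ε) :
    ∀ N, (∀ i, N ≤ i → lam i = 0) →
      ε * sgn k (beta N (fun _ => 0)) = sgn k (beta N lam) := by
  induction h with
  | nil => intro N _; rw [one_mul]
  | cons hrh hr ih =>
    rename_i lam' mu' ε'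
    intro N hN
    have hmuN : ∀ i, N ≤ i → mu' i = 0 := by
      intro i hi
      have h1 := hrh.2.2.1 i
      have h2 := hN i hi
      omega
    rw [mul_assoc, ih N hmuN, sgn_rimhook hk hrh hN]

end SignWD

/-- For a partition `λ` with empty `k`-core, the sign `σ_λ = (-1)^{ht(t)}` is independent
of the chosen sequence `t` of `k`-rim hook removals reducing `λ` to the empty partition. -/
theorem sign_well_defined (k : ℕ) (hk : 1 ≤ k) (lam : ℕ → ℕ) (hlam : IsPartitionFun lam)
    (ε ε' : ℤ) (h : Reduces k lam ε) (h' : Reduces k lam ε') : ε = ε' := by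
  obtain ⟨-, N, hN⟩ := hlam
  have h1 := SignWD.reduces_sgn hk h N hN
  have h2 := SignWD.reduces_sgn hk h' N hN
  have hs := SignWD.sgn_sq k (SignWD.beta N (fun _ => 0))
  have key : ε * SignWD.sgn k (SignWD.beta N (fun _ => 0))
      = ε' * SignWD.sgn k (SignWD.beta N (fun _ => 0)) := by rw [h1, h2]
  calc ε = ε * (SignWD.sgn k (SignWD.beta N (fun _ => 0)) * SignWD.sgn k (SignWD.beta N (fun _ => 0))) := by
        rw [hs, mul_one]
    _ = (ε * SignWD.sgn k (SignWD.beta N (fun _ => 0))) * SignWD.sgn k (SignWD.beta N (fun _ => 0)) := by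
        ring
    _ = (ε' * SignWD.sgn k (SignWD.beta N (fun _ => 0))) * SignWD.sgn k (SignWD.beta N (fun _ => 0)) := by
        rw [key]
    _ = ε' := by rw [mul_assoc, hs, mul_one]
end
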